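/- arXiv:2411.17996 — 4 statements merged into one kernel-verified Lean document; each statement's English description precedes it below -/
import Mathlib

section
/- Let r ≥ 2 and let G be an r-graph. Let 𝒱 = (V₀,…,V_{r−1}) be a tuple of pairwise disjoint subsets of V(G) and 𝒰 = (U₁,…,U_{r−1}) be a tuple of subsets of V(G) with |U_i| = m for all i ∈ [r−1], such that U₁∪⋯∪U_{r−1} is disjoint from V₀∪⋯∪V_{r−1}. Let m* ≤ m be a positive integer, and suppose (1) |V₀| ≤ min_{i∈[r−1]} |V_i| and (2) α*_𝒱(G) ≤ m*. Then G contains a matching M′ consisting of edges crossing 𝒱 that covers at least |V₀| − m* vertices of V₀. If moreover (3) e_G({v},U₁,…,U_{r−1}) ≥ (r−1)²·m^{r−2}·m* for every v ∈ V₀, then there is an additional matching M″ with |M″| ≤ m*, each edge of M″ crossing (V₀,U₁,…,U_{r−1}), such that M = M′ ∪ M″ is a matching covering all vertices of V₀. -/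
open Finset
open scoped Classical

namespace RD

variable {V : Type} [DecidableEq V] [Fintype V]
variable {ι : Type} [DecidableEq ι] [Fintype ι]

/-- `crossCount E X` is the number of tuples `(x₁,…,x_r) ∈ X₁×⋯×X_r` of pairwise
distinct vertices such that `{x₁,…,x_r}` is an edge: this is `e_G(X₁,…,X_r)`. -/
noncomputable def crossCount (E : Finset (Finset V)) {r : ℕ} (X : Fin r → Finset V) : ℕ :=
  ((Fintype.piFinset X).filter
    (fun x => Function.Injective x ∧ Finset.image x Finset.univ ∈ E)).card

/-- The `r`-partite hole number `α*(G)`: the largest `t` such that there are sets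
`X₁,…,X_r` of size `t` each with `e_G(X₁,…,X_r) = 0`. -/
noncomputable def holeNumber (E : Finset (Finset V)) (r : ℕ) : ℕ :=
  sSup {t | ∃ X : Fin r → Finset V, (∀ i, (X i).card = t) ∧ crossCount E X = 0}

/-- The hole number `α*_𝒱(G)` relative to a tuple `W` of host sets. -/
noncomputable def holeNumberWithin (E : Finset (Finset V)) {r : ℕ}
    (W : Fin r → Finset V) : ℕ :=
  sSup {t | ∃ X : Fin r → Finset V, (∀ i, X i ⊆ W i ∧ (X i).card = t) ∧ crossCount E X = 0}

/-- Hole number for the parts `P i`, `i ∈ e` (for pairwise disjoint parts):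
the largest `m` such that there are `X i ⊆ P i` of size `m` (for `i ∈ e`) such that
no edge of `G` has one vertex in each `X i`. -/
noncomputable def holeNumberOn (E : Finset (Finset V)) (e : Finset ι)
    (P : ι → Finset V) : ℕ :=
  sSup {m | ∃ X : ι → Finset V, (∀ i ∈ e, X i ⊆ P i ∧ (X i).card = m) ∧
    ∀ g ∈ E, ¬ (∀ i ∈ e, (g ∩ X i).Nonempty)}

/-- The degree of a vertex: the number of edges containing it. -/
noncomputable def deg (E : Finset (Finset V)) (v : V) : ℕ :=
  (E.filter (fun e => v ∈ e)).card

/-- The degree of a vertex set: the number of edges containing it. -/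
noncomputable def degOn (E : Finset (Finset V)) (S : Finset V) : ℕ :=
  (E.filter (fun e => S ⊆ e)).card

/-- The degree of `v` in the multipartite subgraph `G[𝒱_e]` spanned by the parts
`P i`, `i ∈ e` (for pairwise disjoint parts). -/
noncomputable def degIn (E : Finset (Finset V)) (e : Finset ι) (P : ι → Finset V)
    (v : V) : ℕ :=
  (E.filter (fun g => v ∈ g ∧ ∀ i ∈ e, (g ∩ P i).Nonempty)).card

/-- A matching: a collection of pairwise disjoint edges. -/
def IsMatching (M : Finset (Finset V)) : Prop :=
  ∀ e ∈ M, ∀ f ∈ M, e ≠ f → Disjoint e f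

/-- A set `e` crosses the tuple `X` if its elements can be ordered as `x₁,…,x_r`
with `x_i ∈ X i`. -/
def Crosses {r : ℕ} (X : Fin r → Finset V) (e : Finset V) : Prop :=
  ∃ x : Fin r → V, Function.Injective x ∧ Finset.image x Finset.univ = e ∧ ∀ i, x i ∈ X i

/-- The set of vertices covered by a collection of edges. -/
noncomputable def support (S : Finset (Finset V)) : Finset V := S.sup id

/-- The `i`-th edge (`i` starting from `0`) of the linear path with vertex sequence `f`. -/
noncomputable def pathEdge (r : ℕ) (f : ℕ → V) (i : ℕ) : Finset V :=
  (Finset.range r).image (fun j => f ((r - 1) * i + j))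

/-- `f` describes a linear path of length `ℓ` from `u` to `v`: the vertices
`f 0, …, f ((r-1)ℓ)` are distinct, the consecutive `r`-blocks are edges,
and the endpoints are `u` and `v`. -/
def IsLinearPathFrom (E : Finset (Finset V)) (r ℓ : ℕ) (f : ℕ → V) (u v : V) : Prop :=
  Set.InjOn f (Set.Iic ((r - 1) * ℓ)) ∧ (∀ i < ℓ, pathEdge r f i ∈ E) ∧
    f 0 = u ∧ f ((r - 1) * ℓ) = v

/-- The edge set of the linear path of length `ℓ` with vertex sequence `f`. -/
noncomputable def pathEdges (r ℓ : ℕ) (f : ℕ → V) : Finset (Finset V) :=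
  (Finset.range ℓ).image (pathEdge r f)

/-- A hypergraph is linear if two distinct edges share at most one vertex. -/
def IsLinear (E : Finset (Finset V)) : Prop :=
  ∀ e ∈ E, ∀ f ∈ E, e ≠ f → (e ∩ f).card ≤ 1

/-- A linear `r`-hypertree (on the whole vertex type `V`): an `r`-uniform linear
hypergraph in which every pair of distinct vertices is connected by a linear path,
uniquely so (as a set of edges). -/
def IsLinearHypertree (r : ℕ) (E : Finset (Finset V)) : Prop :=
  (∀ e ∈ E, e.card = r) ∧ IsLinear E ∧
    ∀ u v : V, u ≠ v →
      (∃ ℓ f, IsLinearPathFrom E r ℓ f u v) ∧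
      (∀ ℓ₁ f₁ ℓ₂ f₂, IsLinearPathFrom E r ℓ₁ f₁ u v →
        IsLinearPathFrom E r ℓ₂ f₂ u v → pathEdges r ℓ₁ f₁ = pathEdges r ℓ₂ f₂)

/-- A linear `r`-hyperforest: an `r`-uniform linear hypergraph in which every pair of
distinct vertices is connected by at most one linear path (as a set of edges);
equivalently, a vertex-disjoint union of linear `r`-hypertrees. -/
def IsLinearHyperforest (r : ℕ) (E : Finset (Finset V)) : Prop :=
  (∀ e ∈ E, e.card = r) ∧ IsLinear E ∧
    ∀ u v : V, u ≠ v →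
      ∀ ℓ₁ f₁ ℓ₂ f₂, IsLinearPathFrom E r ℓ₁ f₁ u v →
        IsLinearPathFrom E r ℓ₂ f₂ u v → pathEdges r ℓ₁ f₁ = pathEdges r ℓ₂ f₂

/-- A leaf-edge of an `r`-uniform hypertree: an edge containing at least `r-1`
vertices of degree one. -/
def IsLeafEdge (E : Finset (Finset V)) (r : ℕ) (e : Finset V) : Prop :=
  e ∈ E ∧ r - 1 ≤ (e.filter (fun v => deg E v = 1)).card

/-- The hypertree `T'` obtained by deleting all leaf-edges. -/
noncomputable def nonLeafEdges (E : Finset (Finset V)) (r : ℕ) : Finset (Finset V) :=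
  E.filter (fun e => ¬ IsLeafEdge E r e)

/-- A pendant star of `T`: a leaf-edge `e` of `T' = nonLeafEdges T`, together with all
leaf-edges of `T` incident to `e ∖ {v}`, where `v` is a vertex of `e` of degree at
least `2` in `T'` (an arbitrary vertex of `e` if no such vertex exists). -/
def IsPendantStar (E : Finset (Finset V)) (r : ℕ) (S : Finset (Finset V)) : Prop :=
  ∃ e, IsLeafEdge (nonLeafEdges E r) r e ∧ ∃ v ∈ e,
    ((∃ w ∈ e, 2 ≤ deg (nonLeafEdges E r) w) → 2 ≤ deg (nonLeafEdges E r) v) ∧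
    S = insert e (E.filter (fun g => IsLeafEdge E r g ∧ (g ∩ (e \ {v})).Nonempty))

/-- A bare path (of length `ℓ ≥ 2`) in the hypergraph with edge set `E`:
a linear path whose internal vertices lie in no edge outside the path. -/
def IsBarePath (E : Finset (Finset V)) (r ℓ : ℕ) (f : ℕ → V) : Prop :=
  2 ≤ ℓ ∧ IsLinearPathFrom E r ℓ f (f 0) (f ((r - 1) * ℓ)) ∧
    ∀ g ∈ E, g ∉ pathEdges r ℓ f → ∀ j, 0 < j → j < (r - 1) * ℓ → f j ∉ g

/-- A caterpillar of length `ℓ` in `T`: a bare path of `T' = nonLeafEdges T` of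
length `ℓ` together with all leaf-edges of `T` incident to its internal vertices. -/
def IsCaterpillar (E : Finset (Finset V)) (r ℓ : ℕ) (C : Finset (Finset V)) : Prop :=
  ∃ f : ℕ → V, IsBarePath (nonLeafEdges E r) r ℓ f ∧
    C = pathEdges r ℓ f ∪
      E.filter (fun g => IsLeafEdge E r g ∧ ∃ j, 0 < j ∧ j < (r - 1) * ℓ ∧ f j ∈ g)

/-- `G` admits the partition `(P, F)`: `P` is a partition of the vertex set and for
every `r`-set `e'` of indices that is not an edge of `F`, no edge of `G` has exactly
one vertex in each `P i`, `i ∈ e'`. -/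
def AdmitsPartition (E : Finset (Finset V)) (r : ℕ) (F : Finset (Finset ι))
    (P : ι → Finset V) : Prop :=
  (∀ i j : ι, i ≠ j → Disjoint (P i) (P j)) ∧ (∀ v : V, ∃ i, v ∈ P i) ∧
    ∀ g ∈ E, ∀ e' : Finset ι, e'.card = r → e' ∉ F →
      ¬ (∀ i ∈ e', (g ∩ P i).card = 1)

/-- A `P`-transversal copy of `F` in `G`, given by the embedding `ψ`. -/
def IsTransversalCopy (E : Finset (Finset V)) (F : Finset (Finset ι))
    (P : ι → Finset V) (ψ : ι → V) : Prop :=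
  Function.Injective ψ ∧ (∀ i, ψ i ∈ P i) ∧ ∀ e ∈ F, e.image ψ ∈ E

/-- `G[S]` has a transversal `F`-factor: a collection of vertex-disjoint
`P`-transversal copies of `F` whose vertex sets partition `S`. -/
def HasTransversalFactor (E : Finset (Finset V)) (F : Finset (Finset ι))
    (P : ι → Finset V) (S : Finset V) : Prop :=
  ∃ (k : ℕ) (ψ : Fin k → ι → V),
    (∀ a, IsTransversalCopy E F P (ψ a)) ∧
    (∀ a b, a ≠ b →
      Disjoint (Finset.image (ψ a) Finset.univ) (Finset.image (ψ b) Finset.univ)) ∧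
    Finset.univ.biUnion (fun a => Finset.image (ψ a) Finset.univ) = S

/-- A `P`-balanced set: one meeting all parts in the same number of vertices. -/
def IsBalanced (P : ι → Finset V) (S : Finset V) : Prop :=
  ∀ i j : ι, (S ∩ P i).card = (S ∩ P j).card

/-- A `P`-transversal set: one meeting every part in exactly one vertex. -/
def IsTransversalSet (P : ι → Finset V) (S : Finset V) : Prop :=
  ∀ i : ι, (S ∩ P i).card = 1

/-- `S'` is an `(F,k)`-absorber of the balanced set `S`. -/
def IsAbsorber (E : Finset (Finset V)) (F : Finset (Finset ι)) (P : ι → Finset V)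
    (k : ℕ) (S S' : Finset V) : Prop :=
  S' ⊆ Finset.univ \ S ∧ S'.card ≤ k * Fintype.card ι ∧
    HasTransversalFactor E F P S' ∧ HasTransversalFactor E F P (S ∪ S')

/-- `A` is a `(γ,F)`-absorbing set. -/
def IsAbsorbingSet (E : Finset (Finset V)) (F : Finset (Finset ι)) (P : ι → Finset V)
    (γ : ℝ) (A : Finset V) : Prop :=
  ∀ S' : Finset V, S' ⊆ Finset.univ \ A → IsBalanced P S' →
    (S'.card : ℝ) ≤ (Fintype.card ι : ℝ) * γ * (Fintype.card V : ℝ) →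
    HasTransversalFactor E F P (A ∪ S')

/-- `u` and `v` are `(F,m,k)`-reachable. -/
def Reachable (E : Finset (Finset V)) (F : Finset (Finset ι)) (P : ι → Finset V)
    (m : ℝ) (k : ℕ) (u v : V) : Prop :=
  ∀ W : Finset V, W ⊆ Finset.univ \ {u, v} → (∀ j : ι, ((W ∩ P j).card : ℝ) ≤ m) →
    ∃ S : Finset V, S ⊆ Finset.univ \ (W ∪ {u, v}) ∧
      S.card ≤ k * Fintype.card ι - 1 ∧
      HasTransversalFactor E F P (insert u S) ∧ HasTransversalFactor E F P (insert v S)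

/-- `v` is weakly `(F,m,k)`-reachable to `U`. -/
def WeaklyReachable (E : Finset (Finset V)) (F : Finset (Finset ι)) (P : ι → Finset V)
    (m : ℝ) (k : ℕ) (v : V) (U : Finset V) : Prop :=
  ∀ W : Finset V, W ⊆ U \ {v} → (∀ j : ι, ((W ∩ P j).card : ℝ) ≤ m) →
    ∃ u ∈ U \ W, ∃ S : Finset V, S ⊆ Finset.univ \ (W ∪ {u, v}) ∧
      S.card ≤ k * Fintype.card ι - 1 ∧
      HasTransversalFactor E F P (insert u S) ∧ HasTransversalFactor E F P (insert v S)

/-- A set `U ⊆ V_i` is `(F,m,k)`-closed. -/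
def IsClosed (E : Finset (Finset V)) (F : Finset (Finset ι)) (P : ι → Finset V)
    (m : ℝ) (k : ℕ) (U : Finset V) : Prop :=
  ∀ u ∈ U, ∀ v ∈ U, u ≠ v → Reachable E F P m k u v

/-- The tuple `X` is `(τ,d)`-regular. -/
def IsRegularTuple (E : Finset (Finset V)) {r : ℕ} (τ d : ℝ) (X : Fin r → Finset V) :
    Prop :=
  ∀ Y : Fin r → Finset V, (∀ i, Y i ⊆ X i) →
    (∀ i, τ * ((X i).card : ℝ) ≤ ((Y i).card : ℝ)) →
    |d - (crossCount E Y : ℝ) / ∏ i, ((Y i).card : ℝ)| ≤ τ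

/-- The tuple `X` is `(τ,d+)`-regular. -/
def IsRegularPlus (E : Finset (Finset V)) {r : ℕ} (τ d : ℝ) (X : Fin r → Finset V) :
    Prop :=
  ∃ d' : ℝ, d ≤ d' ∧ IsRegularTuple E τ d' X

/-- The `i`-th edge (for `i ∈ [t]`, `0`-indexed) of the linear cycle `C_t^{(r)}`
on the vertex set `Fin ((r-1)t)`. -/
noncomputable def cycEdge (r t i : ℕ) : Finset (Fin ((r - 1) * t)) :=
  Finset.univ.filter (fun v => ∃ j < r, (v : ℕ) = ((r - 1) * i + j) % ((r - 1) * t))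

/-- The edge set of the linear cycle `C_t^{(r)}` on the vertex set `Fin ((r-1)t)`. -/
noncomputable def cycF (r t : ℕ) : Finset (Finset (Fin ((r - 1) * t))) :=
  (Finset.range t).image (cycEdge r t)

end RD

lemma insertMatch {V : Type} [DecidableEq V] {M : Finset (Finset V)} {e : Finset V}
    (hM : RD.IsMatching M) (h : ∀ f ∈ M, Disjoint e f) : RD.IsMatching (insert e M) := by
  intro g hg f hf hne
  rcases Finset.mem_insert.1 hg with hge | hg
  · rcases Finset.mem_insert.1 hf with hfe | hf
    · exact absurd (hge.trans hfe.symm) hne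
    · exact hge ▸ h f hf
  · rcases Finset.mem_insert.1 hf with hfe | hf
    · exact hfe ▸ (h g hg).symm
    · exact hM g hg f hf hne

lemma crossInterSingleton {V : Type} [DecidableEq V] {r : ℕ} {X : Fin r → Finset V}
    (hdisj : ∀ i j, i ≠ j → Disjoint (X i) (X j)) {x : Fin r → V}
    (hinj : Function.Injective x) (hx : ∀ i, x i ∈ X i) (i : Fin r) :
    (Finset.image x Finset.univ) ∩ X i = {x i} := by
  ext w
  simp only [Finset.mem_inter, Finset.mem_image, Finset.mem_univ, true_and,
    Finset.mem_singleton]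
  constructor
  · rintro ⟨⟨j, rfl⟩, hw⟩
    by_contra hne
    have hji : j ≠ i := by rintro rfl; exact hne rfl
    exact absurd hw (Finset.disjoint_left.1 (hdisj j i hji) (hx j))
  · rintro rfl; exact ⟨⟨i, rfl⟩, hx i⟩

lemma buildM1 (r : ℕ) (hr : 2 ≤ r) {V : Type} [DecidableEq V] [Fintype V]
    (E : Finset (Finset V)) (X : Fin r → Finset V)
    (hXdisj : ∀ i j, i ≠ j → Disjoint (X i) (X j))
    (mstar : ℕ)
    (hsize : ∀ i : Fin r, (X ⟨0, by linarith⟩).card ≤ (X i).card)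
    (hhole : RD.holeNumberWithin E X ≤ mstar) :
    ∃ M' : Finset (Finset V), M' ⊆ E ∧ RD.IsMatching M' ∧ (∀ e ∈ M', RD.Crosses X e) ∧
      (∀ i, ((X i).filter (fun v => ∃ e ∈ M', v ∈ e)).card = M'.card) ∧
      ((X ⟨0, by linarith⟩).filter (fun v => ¬ ∃ e ∈ M', v ∈ e)).card ≤ mstar := by
  have hr0 : 0 < r := by omega
  set s : Finset (Finset (Finset V)) := E.powerset.filter
      (fun M => RD.IsMatching M ∧ ∀ e ∈ M, RD.Crosses X e) with hs
  have hs0 : (∅ : Finset (Finset V)) ∈ s := by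
    refine Finset.mem_filter.2 ⟨Finset.empty_mem_powerset _, ?_, ?_⟩
    · intro e he; simp at he
    · intro e he; simp at he
  obtain ⟨M', hM's, hmax⟩ := s.exists_max_image
      (fun M => ((X (⟨0, hr0⟩ : Fin r)).filter (fun v => ∃ e ∈ M, v ∈ e)).card) ⟨∅, hs0⟩
  obtain ⟨hM'pow, hM'match, hM'cross⟩ := Finset.mem_filter.1 hM's
  have hM'E : M' ⊆ E := Finset.mem_powerset.1 hM'pow
  have hcov : ∀ M : Finset (Finset V), M ∈ s → ∀ i,
      ((X i).filter (fun v => ∃ e ∈ M, v ∈ e)).card = M.card := by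
    intro M hM i
    obtain ⟨hMpow, hMmatch, hMcross⟩ := Finset.mem_filter.1 hM
    have heq : (X i).filter (fun v => ∃ e ∈ M, v ∈ e) = M.biUnion (fun e => X i ∩ e) := by
      ext w
      simp only [Finset.mem_filter, Finset.mem_biUnion, Finset.mem_inter]
      tauto
    rw [heq, Finset.card_biUnion]
    · have hone : ∀ e ∈ M, (X i ∩ e).card = 1 := by
        intro e he
        obtain ⟨x, hxinj, hximg, hxmem⟩ := hMcross e he
        rw [Finset.inter_comm, ← hximg,
          crossInterSingleton hXdisj hxinj hxmem i, Finset.card_singleton]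
      calc ∑ e ∈ M, (X i ∩ e).card = ∑ _e ∈ M, 1 := Finset.sum_congr rfl hone
        _ = M.card := by simp
    · intro e he f hf hne
      exact (hMmatch e he f hf hne).mono Finset.inter_subset_right Finset.inter_subset_right
  have hc0 := hcov M' hM's
  have hunc : ((X (⟨0, hr0⟩ : Fin r)).filter (fun v => ¬ ∃ e ∈ M', v ∈ e)).card ≤ mstar := by
    by_contra hlt
    rw [Nat.not_le] at hlt
    set t := ((X (⟨0, hr0⟩ : Fin r)).filter (fun v => ¬ ∃ e ∈ M', v ∈ e)).card with htdef
    have hDle : ∀ i : Fin r, t ≤ ((X i).filter (fun v => ¬ ∃ e ∈ M', v ∈ e)).card := by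
      intro i
      have h1 := Finset.card_filter_add_card_filter_not
        (s := X i) (p := fun v => ∃ e ∈ M', v ∈ e)
      have h2 := Finset.card_filter_add_card_filter_not
        (s := X (⟨0, hr0⟩ : Fin r)) (p := fun v => ∃ e ∈ M', v ∈ e)
      have h3 := hc0 i
      have h4 := hc0 (⟨0, hr0⟩ : Fin r)
      have h5 := hsize i
      omega
    choose Y hY1 hY2 using fun i : Fin r => Finset.exists_subset_card_eq
      (hDle i)
    have hY3 : ∀ i, Y i ⊆ X i := fun i => (hY1 i).trans (Finset.filter_subset _ _)
    have hnz : RD.crossCount E Y ≠ 0 := by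
      intro h0
      have hmem : t ∈ {t | ∃ X' : Fin r → Finset V,
          (∀ i, X' i ⊆ X i ∧ (X' i).card = t) ∧ RD.crossCount E X' = 0} :=
        ⟨Y, fun i => ⟨hY3 i, hY2 i⟩, h0⟩
      have hbdd : BddAbove {t | ∃ X' : Fin r → Finset V,
          (∀ i, X' i ⊆ X i ∧ (X' i).card = t) ∧ RD.crossCount E X' = 0} := by
        refine ⟨(X (⟨0, hr0⟩ : Fin r)).card, ?_⟩
        rintro t' ⟨X', hX', -⟩
        rw [← (hX' ⟨0, hr0⟩).2]
        exact Finset.card_le_card (hX' ⟨0, hr0⟩).1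
      have hle : t ≤ RD.holeNumberWithin E X := le_csSup hbdd hmem
      omega
    have hpos : 0 < ((Fintype.piFinset Y).filter
        (fun x => Function.Injective x ∧ Finset.image x Finset.univ ∈ E)).card :=
      Nat.pos_of_ne_zero hnz
    obtain ⟨x, hx⟩ := Finset.card_pos.1 hpos
    obtain ⟨hxpi, hxinj, hxE⟩ := Finset.mem_filter.1 hx
    have hxY : ∀ i, x i ∈ Y i := Fintype.mem_piFinset.1 hxpi
    have hxD : ∀ i, x i ∈ (X i).filter (fun v => ¬ ∃ e ∈ M', v ∈ e) := fun i => hY1 i (hxY i)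
    set e : Finset V := Finset.image x Finset.univ with hedef
    have hnew : insert e M' ∈ s := by
      refine Finset.mem_filter.2 ⟨Finset.mem_powerset.2 (Finset.insert_subset hxE hM'E),
        ?_, ?_⟩
      · refine insertMatch hM'match ?_
        intro f hf
        rw [Finset.disjoint_left]
        intro w hwe hwf
        obtain ⟨j, -, rfl⟩ := Finset.mem_image.1 hwe
        exact (Finset.mem_filter.1 (hxD j)).2 ⟨f, hf, hwf⟩
      · intro g hg
        rcases Finset.mem_insert.1 hg with rfl | hg
        · exact ⟨x, hxinj, rfl, fun i => hY3 i (hxY i)⟩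
        · exact hM'cross g hg
    have hstrict : ((X (⟨0, hr0⟩ : Fin r)).filter (fun v => ∃ f ∈ M', v ∈ f)).card <
        ((X (⟨0, hr0⟩ : Fin r)).filter (fun v => ∃ f ∈ insert e M', v ∈ f)).card := by
      apply Finset.card_lt_card
      rw [Finset.ssubset_iff_of_subset]
      · refine ⟨x ⟨0, hr0⟩, ?_, ?_⟩
        · exact Finset.mem_filter.2 ⟨(Finset.mem_filter.1 (hxD _)).1,
            e, Finset.mem_insert_self _ _, Finset.mem_image_of_mem x (Finset.mem_univ _)⟩
        · intro hmem
          exact (Finset.mem_filter.1 (hxD _)).2 (Finset.mem_filter.1 hmem).2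
      · intro v hv
        obtain ⟨hv1, e', he', hv2⟩ := Finset.mem_filter.1 hv
        exact Finset.mem_filter.2 ⟨hv1, e', Finset.mem_insert_of_mem he', hv2⟩
    have hle := hmax (insert e M') hnew
    omega
  exact ⟨M', hM'E, hM'match, hM'cross, hc0, hunc⟩

lemma buildM2 (r : ℕ) (hr : 2 ≤ r) {V : Type} [DecidableEq V] [Fintype V]
    (E : Finset (Finset V)) (U : Fin r → Finset V) (m : ℕ)
    (hU : ∀ i : Fin r, (i : ℕ) ≠ 0 → (U i).card = m)
    (X0 : Finset V)
    (hUX0 : ∀ i : Fin r, (i : ℕ) ≠ 0 → Disjoint (U i) X0)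
    (mstar : ℕ) (hm1 : 1 ≤ mstar) (hmm : mstar ≤ m)
    (hdeg : ∀ v ∈ X0, (r - 1) ^ 2 * m ^ (r - 2) * mstar ≤
      RD.crossCount E (fun i : Fin r => if (i : ℕ) = 0 then {v} else U i))
    (S : Finset V) :
    S ⊆ X0 → S.card ≤ mstar →
    ∃ M'' : Finset (Finset V), M'' ⊆ E ∧ M''.card ≤ S.card ∧ RD.IsMatching M'' ∧
      (∀ f ∈ M'', ∃ x : Fin r → V, Function.Injective x ∧
        Finset.image x Finset.univ = f ∧ x ⟨0, by linarith⟩ ∈ S ∧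
        ∀ i : Fin r, (i : ℕ) ≠ 0 → x i ∈ U i) ∧
      (∀ v ∈ S, ∃ f ∈ M'', v ∈ f) := by
  have hr0 : 0 < r := by omega
  induction S using Finset.induction_on with
  | empty =>
    intro _ _
    refine ⟨∅, by simp, by simp, by intro e he f hf hne; simp at he, by simp, by simp⟩
  | @insert a S' ha IH =>
    intro hsub hcard
    have haX0 : a ∈ X0 := hsub (Finset.mem_insert_self a S')
    have hS'sub : S' ⊆ X0 := fun v hv => hsub (Finset.mem_insert_of_mem hv)
    have hS'card : S'.card ≤ mstar - 1 := by
      have := Finset.card_insert_of_notMem ha; omega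
    obtain ⟨M'', hME, hMcard, hMmatch, hMinv, hMcov⟩ := IH hS'sub (by omega)
    set i0 : Fin r := ⟨0, hr0⟩ with hi0def
    set Z : Fin r → Finset V :=
      fun i => if (i : ℕ) = 0 then ({a} : Finset V) else U i with hZ
    set UU : Finset V := (Finset.univ.filter (fun i : Fin r => (i : ℕ) ≠ 0)).biUnion U
      with hUUdef
    set W : Finset V := RD.support M'' ∩ UU with hWdef
    have hfr : ∀ f ∈ M'', (f ∩ UU).card ≤ r - 1 := by
      intro f hf
      obtain ⟨y, hyinj, hyimg, hyS, hyU⟩ := hMinv f hf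
      have hsub2 : f ∩ UU ⊆ f.erase (y i0) := by
        intro w hw
        obtain ⟨hwf, hwU⟩ := Finset.mem_inter.1 hw
        obtain ⟨k, hk, hwk⟩ := Finset.mem_biUnion.1 hwU
        have hk0 : (k : ℕ) ≠ 0 := (Finset.mem_filter.1 hk).2
        refine Finset.mem_erase.2 ⟨?_, hwf⟩
        rintro rfl
        exact absurd (hS'sub hyS) (Finset.disjoint_left.1 (hUX0 k hk0) hwk)
      have hfcard : f.card = r := by
        rw [← hyimg, Finset.card_image_of_injective _ hyinj, Finset.card_univ,
          Fintype.card_fin]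
      calc (f ∩ UU).card ≤ (f.erase (y i0)).card := Finset.card_le_card hsub2
        _ = f.card - 1 := Finset.card_erase_of_mem (by
              rw [← hyimg]; exact Finset.mem_image_of_mem y (Finset.mem_univ i0))
        _ ≤ r - 1 := by omega
    have hWcard : W.card ≤ (r - 1) * (mstar - 1) := by
      have hWsub : W ⊆ M''.biUnion (fun f => f ∩ UU) := by
        intro w hw
        obtain ⟨hws, hwU⟩ := Finset.mem_inter.1 hw
        rw [RD.support, Finset.mem_sup] at hws
        obtain ⟨f, hf, hwf⟩ := hws
        exact Finset.mem_biUnion.2 ⟨f, hf, Finset.mem_inter.2 ⟨hwf, hwU⟩⟩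
      calc W.card ≤ (M''.biUnion (fun f => f ∩ UU)).card := Finset.card_le_card hWsub
        _ ≤ ∑ f ∈ M'', (f ∩ UU).card := Finset.card_biUnion_le
        _ ≤ ∑ _f ∈ M'', (r - 1) := Finset.sum_le_sum hfr
        _ = M''.card * (r - 1) := by rw [Finset.sum_const, smul_eq_mul]
        _ ≤ (mstar - 1) * (r - 1) := Nat.mul_le_mul_right _ (le_trans hMcard hS'card)
        _ = (r - 1) * (mstar - 1) := Nat.mul_comm _ _
    set T : Finset (Fin r → V) := (Fintype.piFinset Z).filter
      (fun x => Function.Injective x ∧ Finset.image x Finset.univ ∈ E) with hTdef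
    have hTcard : RD.crossCount E Z = T.card := rfl
    set B : Finset (Fin r → V) := T.filter
      (fun x => ∃ i : Fin r, (i : ℕ) ≠ 0 ∧ x i ∈ W) with hBdef
    have hpi_card : ∀ i : Fin r, (i : ℕ) ≠ 0 → ∀ w : V,
        (Fintype.piFinset (Function.update Z i {w})).card ≤ m ^ (r - 2) := by
      intro i hi w
      rw [Fintype.card_piFinset]
      have hii0 : i0 ≠ i := by
        rintro rfl; exact hi rfl
      have hpair : ({i0, i} : Finset (Fin r)) ⊆ Finset.univ := Finset.subset_univ _
      rw [← Finset.prod_sdiff hpair]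
      have h2 : ∏ j ∈ ({i0, i} : Finset (Fin r)), (Function.update Z i {w} j).card = 1 := by
        rw [Finset.prod_pair hii0]
        rw [Function.update_of_ne hii0, Function.update_self]
        simp [hZ, hi0def]
      rw [h2, mul_one]
      have hcard_sdiff : (Finset.univ \ ({i0, i} : Finset (Fin r))).card = r - 2 := by
        rw [Finset.card_sdiff_of_subset hpair, Finset.card_univ, Fintype.card_fin,
          Finset.card_insert_of_notMem (by simp [hii0]), Finset.card_singleton]
      calc ∏ j ∈ Finset.univ \ ({i0, i} : Finset (Fin r)), (Function.update Z i {w} j).card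
          ≤ m ^ (Finset.univ \ ({i0, i} : Finset (Fin r))).card := by
            apply Finset.prod_le_pow_card
            intro j hj
            have hj2 := (Finset.mem_sdiff.1 hj).2
            simp only [Finset.mem_insert, Finset.mem_singleton] at hj2
            push_neg at hj2
            have hj0 : (j : ℕ) ≠ 0 := fun h => hj2.1 (Fin.ext h)
            rw [Function.update_of_ne hj2.2]
            simp only [hZ, if_neg hj0]
            exact le_of_eq (hU j hj0)
        _ = m ^ (r - 2) := by rw [hcard_sdiff]
    have hfc : (Finset.univ.filter (fun i : Fin r => (i : ℕ) ≠ 0)).card ≤ r - 1 := by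
      have hsub3 : Finset.univ.filter (fun i : Fin r => (i : ℕ) ≠ 0) ⊆
          Finset.univ.erase i0 := by
        intro i hi
        exact Finset.mem_erase.2 ⟨fun h => (Finset.mem_filter.1 hi).2 (by rw [h]),
          Finset.mem_univ _⟩
      calc _ ≤ (Finset.univ.erase i0).card := Finset.card_le_card hsub3
        _ = r - 1 := by
          rw [Finset.card_erase_of_mem (Finset.mem_univ _), Finset.card_univ,
            Fintype.card_fin]
    have hBsub : B ⊆ (Finset.univ.filter (fun i : Fin r => (i : ℕ) ≠ 0)).biUnion
        (fun i => W.biUnion (fun w => Fintype.piFinset (Function.update Z i {w}))) := by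
      intro x hx
      obtain ⟨hxT, i, hi, hiW⟩ := Finset.mem_filter.1 hx
      have hxpi := (Finset.mem_filter.1 hxT).1
      refine Finset.mem_biUnion.2 ⟨i, Finset.mem_filter.2 ⟨Finset.mem_univ _, hi⟩,
        Finset.mem_biUnion.2 ⟨x i, hiW, ?_⟩⟩
      rw [Fintype.mem_piFinset]
      intro j
      rcases eq_or_ne j i with rfl | hji
      · rw [Function.update_self]; exact Finset.mem_singleton_self _
      · rw [Function.update_of_ne hji]; exact Fintype.mem_piFinset.1 hxpi j
    have hBcard : B.card ≤ (r - 1) * ((r - 1) * (mstar - 1) * m ^ (r - 2)) := by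
      calc B.card ≤ ((Finset.univ.filter (fun i : Fin r => (i : ℕ) ≠ 0)).biUnion
            (fun i => W.biUnion (fun w => Fintype.piFinset (Function.update Z i {w})))).card :=
          Finset.card_le_card hBsub
        _ ≤ ∑ i ∈ Finset.univ.filter (fun i : Fin r => (i : ℕ) ≠ 0),
            (W.biUnion (fun w => Fintype.piFinset (Function.update Z i {w}))).card :=
          Finset.card_biUnion_le
        _ ≤ ∑ _i ∈ Finset.univ.filter (fun i : Fin r => (i : ℕ) ≠ 0),
            ((r - 1) * (mstar - 1) * m ^ (r - 2)) := by
          refine Finset.sum_le_sum ?_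
          intro i hi
          have hi0' : (i : ℕ) ≠ 0 := (Finset.mem_filter.1 hi).2
          calc (W.biUnion (fun w => Fintype.piFinset (Function.update Z i {w}))).card
              ≤ ∑ w ∈ W, (Fintype.piFinset (Function.update Z i {w})).card :=
              Finset.card_biUnion_le
            _ ≤ ∑ _w ∈ W, m ^ (r - 2) := Finset.sum_le_sum (fun w _ => hpi_card i hi0' w)
            _ = W.card * m ^ (r - 2) := by rw [Finset.sum_const, smul_eq_mul]
            _ ≤ (r - 1) * (mstar - 1) * m ^ (r - 2) := Nat.mul_le_mul_right _ hWcard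
        _ = (Finset.univ.filter (fun i : Fin r => (i : ℕ) ≠ 0)).card *
            ((r - 1) * (mstar - 1) * m ^ (r - 2)) := by rw [Finset.sum_const, smul_eq_mul]
        _ ≤ (r - 1) * ((r - 1) * (mstar - 1) * m ^ (r - 2)) := Nat.mul_le_mul_right _ hfc
    have hTlb : (r - 1) ^ 2 * m ^ (r - 2) * mstar ≤ T.card := by
      rw [← hTcard]
      have := hdeg a haX0
      rw [← hZ] at this
      exact this
    have hlt : B.card < T.card := by
      have hpos : 0 < (r - 1) ^ 2 * m ^ (r - 2) :=
        Nat.mul_pos (pow_pos (by omega) 2) (pow_pos (by omega) _)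
      calc B.card ≤ (r - 1) * ((r - 1) * (mstar - 1) * m ^ (r - 2)) := hBcard
        _ = (r - 1) ^ 2 * m ^ (r - 2) * (mstar - 1) := by ring
        _ < (r - 1) ^ 2 * m ^ (r - 2) * mstar := by
          exact mul_lt_mul_of_pos_left (by omega) hpos
        _ ≤ T.card := hTlb
    have hBsubT : B ⊆ T := Finset.filter_subset _ _
    have hne : (T \ B).Nonempty := by
      rw [← Finset.card_pos, Finset.card_sdiff_of_subset hBsubT]
      omega
    obtain ⟨x, hx⟩ := hne
    obtain ⟨hxT, hxnB⟩ := Finset.mem_sdiff.1 hx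
    obtain ⟨hxpi, hxinj, hxE⟩ := Finset.mem_filter.1 hxT
    have hxW : ∀ i : Fin r, (i : ℕ) ≠ 0 → x i ∉ W := by
      intro i hi hiW
      exact hxnB (Finset.mem_filter.2 ⟨hxT, i, hi, hiW⟩)
    have hxa : x i0 = a := by
      have h := Fintype.mem_piFinset.1 hxpi i0
      simpa [hZ, hi0def] using h
    have hxU : ∀ i : Fin r, (i : ℕ) ≠ 0 → x i ∈ U i := by
      intro i hi
      have h := Fintype.mem_piFinset.1 hxpi i
      simp only [hZ, if_neg hi] at h
      exact h
    set e : Finset V := Finset.image x Finset.univ with hedef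
    have hdisjoint : ∀ f ∈ M'', Disjoint e f := by
      intro f hf
      obtain ⟨y, hyinj, hyimg, hyS, hyU⟩ := hMinv f hf
      rw [Finset.disjoint_left]
      intro w hwe hwf
      obtain ⟨j, -, rfl⟩ := Finset.mem_image.1 hwe
      by_cases hj : (j : ℕ) = 0
      · have hji : j = i0 := Fin.ext hj
        rw [hji, hxa] at hwf
        rw [← hyimg] at hwf
        obtain ⟨k, -, hk⟩ := Finset.mem_image.1 hwf
        by_cases hk0 : (k : ℕ) = 0
        · have hki : k = i0 := Fin.ext hk0
          rw [hki] at hk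
          exact ha (hk ▸ hyS)
        · exact absurd haX0 (Finset.disjoint_left.1 (hUX0 k hk0) (hk ▸ hyU k hk0))
      · have hmemW : x j ∈ W := Finset.mem_inter.2 ⟨by
            rw [RD.support, Finset.mem_sup]
            exact ⟨f, hf, hwf⟩,
          Finset.mem_biUnion.2 ⟨j, Finset.mem_filter.2 ⟨Finset.mem_univ _, hj⟩, hxU j hj⟩⟩
        exact hxW j hj hmemW
    refine ⟨insert e M'', Finset.insert_subset hxE hME, ?_,
      insertMatch hMmatch hdisjoint, ?_, ?_⟩
    · calc (insert e M'').card ≤ M''.card + 1 := Finset.card_insert_le _ _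
        _ ≤ S'.card + 1 := by omega
        _ = (insert a S').card := (Finset.card_insert_of_notMem ha).symm
    · intro f hf
      rcases Finset.mem_insert.1 hf with rfl | hf
      · exact ⟨x, hxinj, hedef.symm, by rw [hxa]; exact Finset.mem_insert_self a S', hxU⟩
      · obtain ⟨y, h1, h2, h3, h4⟩ := hMinv f hf
        exact ⟨y, h1, h2, Finset.mem_insert_of_mem h3, h4⟩
    · intro v hv
      rcases Finset.mem_insert.1 hv with rfl | hv
      · exact ⟨e, Finset.mem_insert_self _ _, by
          rw [← hxa]; exact Finset.mem_image_of_mem x (Finset.mem_univ i0)⟩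
      · obtain ⟨f, hf1, hf2⟩ := hMcov v hv
        exact ⟨f, Finset.mem_insert_of_mem hf1, hf2⟩

/-- the matching lemma (Lemma 3.1 / `lem: find matching`). -/
theorem stmt_5 (r : ℕ) (hr : 2 ≤ r) (V : Type) [DecidableEq V] [Fintype V]
    (E : Finset (Finset V)) (hE : ∀ e ∈ E, e.card = r)
    (X : Fin r → Finset V) (hXdisj : ∀ i j, i ≠ j → Disjoint (X i) (X j))
    (U : Fin r → Finset V) (m : ℕ) (hU : ∀ i : Fin r, (i : ℕ) ≠ 0 → (U i).card = m)
    (hUX : ∀ i : Fin r, (i : ℕ) ≠ 0 → ∀ j : Fin r, Disjoint (U i) (X j))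
    (mstar : ℕ) (hm1 : 1 ≤ mstar) (hmm : mstar ≤ m)
    (hsize : ∀ i : Fin r, (X ⟨0, by omega⟩).card ≤ (X i).card)
    (hhole : RD.holeNumberWithin E X ≤ mstar) :
    (∃ M' : Finset (Finset V), M' ⊆ E ∧ RD.IsMatching M' ∧
        (∀ e ∈ M', RD.Crosses X e) ∧
        (X ⟨0, by omega⟩).card - mstar ≤
          ((X ⟨0, by omega⟩).filter (fun v => ∃ e ∈ M', v ∈ e)).card) ∧
      ((∀ v ∈ X ⟨0, by omega⟩,
          (r - 1) ^ 2 * m ^ (r - 2) * mstar ≤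
            RD.crossCount E (fun i : Fin r => if (i : ℕ) = 0 then {v} else U i)) →
        ∃ M' M'' : Finset (Finset V), M' ⊆ E ∧ M'' ⊆ E ∧
          RD.IsMatching (M' ∪ M'') ∧
          (∀ e ∈ M', RD.Crosses X e) ∧
          (∀ e ∈ M'', RD.Crosses
            (fun i : Fin r => if (i : ℕ) = 0 then X ⟨0, by omega⟩ else U i) e) ∧
          M''.card ≤ mstar ∧
          ∀ v ∈ X ⟨0, by omega⟩, ∃ e ∈ M' ∪ M'', v ∈ e) := by
  classical
  have hr0 : 0 < r := by omega
  obtain ⟨M', hM'E, hM'match, hM'cross, hM'cov, hM'unc⟩ :=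
    buildM1 r hr E X hXdisj mstar hsize hhole
  constructor
  · refine ⟨M', hM'E, hM'match, hM'cross, ?_⟩
    show (X (⟨0, hr0⟩ : Fin r)).card - mstar ≤
      ((X (⟨0, hr0⟩ : Fin r)).filter (fun v => ∃ e ∈ M', v ∈ e)).card
    have h1 := Finset.card_filter_add_card_filter_not
      (s := X (⟨0, hr0⟩ : Fin r)) (p := fun v => ∃ e ∈ M', v ∈ e)
    have h2 : ((X (⟨0, hr0⟩ : Fin r)).filter (fun v => ¬ ∃ e ∈ M', v ∈ e)).card ≤ mstar :=
      hM'unc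
    omega
  · intro hdeg
    set R : Finset V := (X (⟨0, hr0⟩ : Fin r)).filter (fun v => ¬ ∃ e ∈ M', v ∈ e)
      with hRdef
    obtain ⟨M'', hM''E, hM''card, hM''match, hM''inv, hM''cov⟩ :=
      buildM2 r hr E U m hU (X (⟨0, hr0⟩ : Fin r)) (fun i hi => hUX i hi _)
        mstar hm1 hmm hdeg R (Finset.filter_subset _ _) hM'unc
    have hM'M'' : ∀ e ∈ M', ∀ f ∈ M'', Disjoint e f := by
      intro e he f hf
      obtain ⟨y, hyinj, hyimg, hyS, hyU⟩ := hM''inv f hf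
      rw [Finset.disjoint_right]
      intro w hwf hwe
      rw [← hyimg] at hwf
      obtain ⟨k, -, rfl⟩ := Finset.mem_image.1 hwf
      by_cases hk : (k : ℕ) = 0
      · have hki : k = ⟨0, hr0⟩ := Fin.ext hk
        rw [hki] at hwe
        have hnc := (Finset.mem_filter.1 hyS).2
        exact hnc ⟨e, he, hwe⟩
      · obtain ⟨z, hzinj, hzimg, hzX⟩ := hM'cross e he
        rw [← hzimg] at hwe
        obtain ⟨l, -, hl⟩ := Finset.mem_image.1 hwe
        exact absurd (hl ▸ hzX l) (Finset.disjoint_left.1 (hUX k hk l) (hyU k hk))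
    refine ⟨M', M'', hM'E, hM''E, ?_, hM'cross, ?_, le_trans hM''card hM'unc, ?_⟩
    · intro g hg f hf hne
      rcases Finset.mem_union.1 hg with hg | hg <;> rcases Finset.mem_union.1 hf with hf | hf
      · exact hM'match g hg f hf hne
      · exact hM'M'' g hg f hf
      · exact (hM'M'' f hf g hg).symm
      · exact hM''match g hg f hf hne
    · intro f hf
      obtain ⟨y, hyinj, hyimg, hyS, hyU⟩ := hM''inv f hf
      refine ⟨y, hyinj, hyimg, fun i => ?_⟩
      show y i ∈ if (i : ℕ) = 0 then X (⟨0, hr0⟩ : Fin r) else U i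
      by_cases hi : (i : ℕ) = 0
      · rw [if_pos hi]
        have hii : i = (⟨0, hr0⟩ : Fin r) := Fin.ext hi
        rw [hii]
        exact Finset.filter_subset _ _ hyS
      · rw [if_neg hi]
        exact hyU i hi
    · intro v hv
      by_cases hc : ∃ e ∈ M', v ∈ e
      · obtain ⟨e, he, hve⟩ := hc
        exact ⟨e, Finset.mem_union_left _ he, hve⟩
      · have hvR : v ∈ R := Finset.mem_filter.2 ⟨hv, hc⟩
        obtain ⟨f, hf, hvf⟩ := hM''cov v hvR
        exact ⟨f, Finset.mem_union_right _ hf, hvf⟩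
end

section
/- Let r ≥ 2, t ≥ 1, and let G be an r-graph. Let 𝒱 = (V₁,…,V_{(r−1)t+1}) be a tuple of pairwise disjoint subsets of V(G), and for each i ∈ [t] let 𝒱_i denote the r-tuple (V_{(r−1)(i−1)+1},…,V_{(r−1)i+1}). Suppose that |V_j| > ((r−1)t+1)·max_{i∈[t]} α*_{𝒱_i}(G) for every j ∈ [(r−1)t+1]. Then G contains a linear path of length t with vertices v₁,…,v_{(r−1)t+1} satisfying v_j ∈ V_j for every j; in particular this path connects a vertex in V₁ to a vertex in V_{(r−1)t+1}. -/
open Finset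
open scoped Classical

/-- Auxiliary: if each `X a ⊆ W' a` has more than `holeNumberWithin E W'` elements,
then there is an edge crossing the tuple `X`. -/
lemma aux_cross {r : ℕ} (hr : 2 ≤ r) {V : Type} [DecidableEq V] [Fintype V]
    (E : Finset (Finset V)) (W' : Fin r → Finset V) (M : ℕ)
    (hα : RD.holeNumberWithin E W' ≤ M)
    (X : Fin r → Finset V) (hsub : ∀ a, X a ⊆ W' a)
    (hcard : ∀ a, M < (X a).card) :
    ∃ x : Fin r → V, Function.Injective x ∧ Finset.image x Finset.univ ∈ E ∧
      ∀ a, x a ∈ X a := by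
  by_contra hcon
  push_neg at hcon
  have h0 : RD.crossCount E X = 0 := by
    rw [RD.crossCount, Finset.card_eq_zero, Finset.filter_eq_empty_iff]
    intro x hx hpq
    obtain ⟨a, ha⟩ := hcon x hpq.1 hpq.2
    exact ha (Fintype.mem_piFinset.1 hx a)
  choose Y hY hYcard using fun a => Finset.exists_subset_card_eq (hcard a : M + 1 ≤ (X a).card)
  have hY0 : RD.crossCount E Y = 0 := by
    have hmono := Finset.card_le_card
      (Finset.filter_subset_filter
        (fun x : Fin r → V => Function.Injective x ∧ Finset.image x Finset.univ ∈ E)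
        (Fintype.piFinset_subset Y X hY))
    rw [RD.crossCount] at h0 ⊢
    omega
  have hmem : M + 1 ∈ {t | ∃ X : Fin r → Finset V,
      (∀ i, X i ⊆ W' i ∧ (X i).card = t) ∧ RD.crossCount E X = 0} :=
    ⟨Y, fun a => ⟨(hY a).trans (hsub a), hYcard a⟩, hY0⟩
  have hbdd : BddAbove {t | ∃ X : Fin r → Finset V,
      (∀ i, X i ⊆ W' i ∧ (X i).card = t) ∧ RD.crossCount E X = 0} := by
    refine ⟨Fintype.card V, ?_⟩
    rintro m ⟨Z, hZ, -⟩
    rw [← (hZ ⟨0, by omega⟩).2]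
    exact Finset.card_le_univ _
  have hfin : M + 1 ≤ RD.holeNumberWithin E W' := by
    rw [RD.holeNumberWithin]; exact le_csSup hbdd hmem
  omega

/-- the path lemma (Lemma 3.2 / `lem: find path`). -/
theorem stmt_6 (r t : ℕ) (hr : 2 ≤ r) (ht : 1 ≤ t) (V : Type) [DecidableEq V] [Fintype V]
    (E : Finset (Finset V)) (hE : ∀ e ∈ E, e.card = r)
    (W : ℕ → Finset V)
    (hdisj : ∀ j ≤ (r - 1) * t, ∀ j' ≤ (r - 1) * t, j ≠ j' → Disjoint (W j) (W j'))
    (hsize : ∀ j ≤ (r - 1) * t, ∀ i < t,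
      ((r - 1) * t + 1) *
          RD.holeNumberWithin E (fun a : Fin r => W ((r - 1) * i + (a : ℕ))) <
        (W j).card) :
    ∃ f : ℕ → V, RD.IsLinearPathFrom E r t f (f 0) (f ((r - 1) * t)) ∧
      ∀ j ≤ (r - 1) * t, f j ∈ W j := by
  set s := r - 1 with hs
  have hs1 : 1 ≤ s := by omega
  have hrs : r = s + 1 := by omega
  set α : ℕ → ℕ := fun i => RD.holeNumberWithin E (fun a : Fin r => W (s * i + (a : ℕ))) with hα
  set M : ℕ := (Finset.range t).sup α with hMdef
  -- every class is big
  have hWM : ∀ j ≤ s * t, (s * t + 1) * M < (W j).card := by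
    intro j hj
    obtain ⟨i0, hi0, hieq⟩ := Finset.exists_mem_eq_sup (Finset.range t)
      ⟨0, Finset.mem_range.2 (by omega)⟩ α
    rw [hMdef, hieq]
    exact hsize j hj i0 (Finset.mem_range.1 hi0)
  have hMle : ∀ j ≤ s * t, M < (W j).card := fun j hj =>
    lt_of_le_of_lt (Nat.le_mul_of_pos_left M (by omega)) (hWM j hj)
  -- the key induction
  have key : ∀ i ≤ t, ∃ U : Finset V, U ⊆ W (s * i) ∧ M < U.card ∧
      ∀ v ∈ U, ∃ f : ℕ → V, (∀ j ≤ s * i, f j ∈ W j) ∧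
        (∀ k < i, RD.pathEdge r f k ∈ E) ∧ f (s * i) = v := by
    intro i
    induction i with
    | zero =>
      intro _
      refine ⟨W 0, by simp, hMle 0 (by omega), ?_⟩
      intro v hv
      refine ⟨fun _ => v, ?_, by omega, rfl⟩
      intro j hj
      have : j = 0 := by omega
      subst this; exact hv
    | succ i ih =>
      intro hit
      have hi : i < t := by omega
      obtain ⟨U, hUsub, hUcard, hUpath⟩ := ih (by omega)
      set U' : Finset V := (W (s * (i + 1))).filter (fun v => ∃ x : Fin r → V,
        Function.Injective x ∧ Finset.image x Finset.univ ∈ E ∧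
        (∀ a : Fin r, x a ∈ W (s * i + (a : ℕ))) ∧
        x ⟨0, by omega⟩ ∈ U ∧ x ⟨s, by omega⟩ = v) with hU'def
    -- the set of unreachable vertices is small
      set B : Finset V := W (s * (i + 1)) \ U' with hBdef
      have hαle : α i ≤ M := Finset.le_sup (Finset.mem_range.2 hi)
      have hBcard : B.card ≤ M := by
        by_contra hBc
        push_neg at hBc
        obtain ⟨x, hxinj, hxE, hxmem⟩ := aux_cross hr E (fun a : Fin r => W (s * i + (a : ℕ)))
          M hαle
          (fun a : Fin r => if (a : ℕ) = 0 then U else if (a : ℕ) = s then B else W (s * i + (a : ℕ)))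
          (by
            intro a
            by_cases h0 : (a : ℕ) = 0
            · rw [if_pos h0, h0]
              simpa using hUsub
            by_cases hl : (a : ℕ) = s
            · rw [if_neg h0, if_pos hl, hl, show s * i + s = s * (i + 1) from by ring]
              exact Finset.sdiff_subset
            · rw [if_neg h0, if_neg hl])
          (by
            intro a
            by_cases h0 : (a : ℕ) = 0
            · rw [if_pos h0]; exact hUcard
            by_cases hl : (a : ℕ) = s
            · rw [if_neg h0, if_pos hl]; exact hBc
            · rw [if_neg h0, if_neg hl]
              refine hMle _ ?_
              have ha : (a : ℕ) ≤ s := by have := a.isLt; omega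
              calc s * i + (a : ℕ) ≤ s * i + s := by omega
                _ = s * (i + 1) := by ring
                _ ≤ s * t := Nat.mul_le_mul_left _ (by omega))
        -- the last vertex of the crossing edge is both in B and reachable
        have hlast := hxmem ⟨s, by omega⟩
        dsimp only [Fin.val_mk] at hlast
        rw [if_neg (by omega), if_pos rfl] at hlast
        have hx0 := hxmem ⟨0, by omega⟩
        dsimp only [Fin.val_mk] at hx0
        rw [if_pos rfl] at hx0
        have hxW : ∀ a : Fin r, x a ∈ W (s * i + (a : ℕ)) := by
          intro a
          by_cases h0 : (a : ℕ) = 0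
          · have hb := hxmem a
            try dsimp only at hb
            rw [if_pos h0] at hb
            have := hUsub hb
            rw [h0]
            simpa using this
          by_cases hl : (a : ℕ) = s
          · have hb := hxmem a
            try dsimp only at hb
            rw [if_neg h0, if_pos hl] at hb
            have := Finset.sdiff_subset hb
            have heq : s * (i + 1) = s * i + (a : ℕ) := by rw [hl]; ring
            rwa [heq] at this
          · have hb := hxmem a
            try dsimp only at hb
            rwa [if_neg h0, if_neg hl] at hb
        have hmemU' : x ⟨s, by omega⟩ ∈ U' := by
          rw [hU'def, Finset.mem_filter]
          constructor
          · have := hxW ⟨s, by omega⟩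
            simp only [Fin.val_mk] at this
            have heq : s * i + s = s * (i + 1) := by ring
            rwa [heq] at this
          · exact ⟨x, hxinj, hxE, hxW, hx0, rfl⟩
        rw [hBdef, Finset.mem_sdiff] at hlast
        exact hlast.2 hmemU'
      -- hence U' is big
      have hU'sub : U' ⊆ W (s * (i + 1)) := Finset.filter_subset _ _
      have hU'card : M < U'.card := by
        have h1 := Finset.card_sdiff_of_subset hU'sub
        rw [← hBdef] at h1
        have h2 := hWM (s * (i + 1)) (Nat.mul_le_mul_left _ (by omega))
        have h3 := Finset.card_le_card hU'sub
        have h4 : 2 * M ≤ (s * t + 1) * M := Nat.mul_le_mul_right M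
          (by have := Nat.mul_le_mul hs1 ht; omega)
        omega
      refine ⟨U', hU'sub, hU'card, ?_⟩
      -- extend the path
      intro v hv
      rw [hU'def, Finset.mem_filter] at hv
      obtain ⟨hvW, x, hxinj, hxE, hxW, hx0, hxlast⟩ := hv
      obtain ⟨f, hfW, hfE, hfend⟩ := hUpath (x ⟨0, by omega⟩) hx0
      set g : ℕ → V := fun j => if j ≤ s * i then f j
        else x ⟨min (j - s * i) s, by omega⟩ with hgdef
      have hpt : ∀ j (hj : j < r), g (s * i + j) = x ⟨j, hj⟩ := by
        intro j hj
        rcases Nat.eq_zero_or_pos j with h0 | h0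
        · subst h0
          have : g (s * i + 0) = f (s * i) := by rw [hgdef]; simp
          rw [this, hfend]
        · have hle : ¬ (s * i + j ≤ s * i) := by omega
          rw [hgdef]
          simp only [hle, if_false]
          congr 1
          apply Fin.ext
          simp only [Fin.val_mk]
          omega
      refine ⟨g, ?_, ?_, ?_⟩
      · intro j hj
        by_cases hle : j ≤ s * i
        · rw [hgdef]; simp only [hle, if_true]; exact hfW j hle
        · push_neg at hle
          have hsp : s * (i + 1) = s * i + s := by ring
          have hjr : j - s * i < r := by omega
          have heq : s * i + (j - s * i) = j := by omega
          have := hpt (j - s * i) hjr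
          rw [heq] at this
          rw [this]
          have := hxW ⟨j - s * i, hjr⟩
          simp only [Fin.val_mk] at this
          rwa [heq] at this
      · intro k hk
        rcases Nat.lt_succ_iff_lt_or_eq.1 hk with hki | hki
        · have : RD.pathEdge r g k = RD.pathEdge r f k := by
            rw [RD.pathEdge, RD.pathEdge]
            apply Finset.image_congr
            intro j hj
            simp only [Finset.coe_range, Set.mem_Iio] at hj
            have hbound : s * k + j ≤ s * i := by
              have h1 : s * (k + 1) ≤ s * i := Nat.mul_le_mul_left _ (by omega)
              have h2 : s * (k + 1) = s * k + s := by ring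
              omega
            have hbound' : (r - 1) * k + j ≤ s * i := hbound
            rw [hgdef]
            simp [hbound, hbound']
          rw [this]
          exact hfE k hki
        · subst hki
          have : RD.pathEdge r g k = Finset.image x Finset.univ := by
            rw [RD.pathEdge]
            apply Finset.Subset.antisymm
            · intro y hy
              rw [Finset.mem_image] at hy
              obtain ⟨j, hj, hyj⟩ := hy
              rw [Finset.mem_range] at hj
              rw [← hyj, hpt j hj]
              exact Finset.mem_image_of_mem x (Finset.mem_univ _)
            · intro y hy
              rw [Finset.mem_image] at hy
              obtain ⟨a, _, hya⟩ := hy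
              rw [Finset.mem_image]
              refine ⟨(a : ℕ), Finset.mem_range.2 a.isLt, ?_⟩
              rw [hpt (a : ℕ) a.isLt, ← hya]
          rw [this]
          exact hxE
      · have hgt : ¬ (s * (i + 1) ≤ s * i) := by nlinarith [Nat.mul_le_mul_left s (le_refl i)]
        rw [hgdef]
        simp only [hgt, if_false]
        rw [← hxlast]
        congr 1
        apply Fin.ext
        simp only [Fin.val_mk]
        have : s * (i + 1) - s * i = s := by
          have : s * (i + 1) = s * i + s := by ring
          omega
        rw [this]
        simp
  -- conclude
  obtain ⟨U, hUsub, hUcard, hUpath⟩ := key t le_rfl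
  have hUne : U.Nonempty := Finset.card_pos.1 (by omega)
  obtain ⟨v, hv⟩ := hUne
  obtain ⟨f, hfW, hfE, -⟩ := hUpath v hv
  refine ⟨f, ⟨?_, ?_, rfl, rfl⟩, ?_⟩
  · intro a ha b hb hab
    by_contra hne
    have hd := hdisj a ha b hb hne
    rw [hs] at hfW
    exact (Finset.disjoint_left.1 hd (hfW a ha)) (hab ▸ hfW b hb)
  · intro k hk
    exact hfE k hk
  · intro j hj
    exact hfW j hj
end

section
/- Let t ≥ 1 and n ≥ 1 with n^{r−|U|−1} ≥ t. Let G be an r-partite r-graph with r-partition 𝒱 = (V₁,…,V_r), where |V_j| ≤ n for all j ∈ [r]. Fix i ∈ [r], let U ⊆ V(G) be a set with U ∩ V_i = ∅, and let W = { w ∈ V_i : d_G(U ∪ {w}) ≥ t }. Then |W| ≥ (d_G(U) − (t−1)·n) / (n^{r−|U|−1} − t + 1). -/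
open Finset
open scoped Classical

/-- finding a set of large-degree vertices (Lemma 3.3 / `lem: find a set`). -/
theorem stmt_7 (r t n : ℕ) (hr : 2 ≤ r) (ht : 1 ≤ t) (hn : 1 ≤ n)
    (V : Type) [DecidableEq V] [Fintype V]
    (E : Finset (Finset V)) (hE : ∀ e ∈ E, e.card = r)
    (P : Fin r → Finset V) (hdisj : ∀ i j, i ≠ j → Disjoint (P i) (P j))
    (hcover : ∀ v : V, ∃ i, v ∈ P i)
    (hpart : ∀ e ∈ E, ∀ j : Fin r, (e ∩ P j).card = 1)
    (hsizes : ∀ j : Fin r, (P j).card ≤ n)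
    (i : Fin r) (U : Finset V) (hUi : U ∩ P i = ∅)
    (hpow : t ≤ n ^ (r - U.card - 1)) :
    ((RD.degOn E U : ℝ) - ((t : ℝ) - 1) * n) /
        ((n : ℝ) ^ (r - U.card - 1) - (t : ℝ) + 1) ≤
      (((P i).filter (fun w => t ≤ RD.degOn E (insert w U))).card : ℝ) := by
  classical
  set k := r - U.card - 1 with hk
  set W := (P i).filter (fun w => t ≤ RD.degOn E (insert w U)) with hW
  -- Lemma B: degree bound
  have hB : ∀ w ∈ P i, RD.degOn E (insert w U) ≤ n ^ k := by
    intro w hw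
    unfold RD.degOn
    by_cases hne : (E.filter (fun e => insert w U ⊆ e)).Nonempty
    · obtain ⟨e₀, he₀⟩ := hne
      rw [Finset.mem_filter] at he₀
      obtain ⟨he₀E, he₀S⟩ := he₀
      have hwU : w ∉ U := by
        intro h
        have : w ∈ U ∩ P i := Finset.mem_inter.2 ⟨h, hw⟩
        simp [hUi] at this
      set S := insert w U with hSdef
      have hScard : S.card = U.card + 1 := Finset.card_insert_of_notMem hwU
      have hVne : Nonempty V := ⟨w⟩
      set ix : V → Fin r := fun v => Classical.choose (hcover v) with hixdef
      have hix : ∀ v, v ∈ P (ix v) := fun v => Classical.choose_spec (hcover v)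
      have hixinj : Set.InjOn ix S := by
        intro u hu v hv h
        have h1 : u ∈ e₀ ∩ P (ix u) := Finset.mem_inter.2 ⟨he₀S hu, hix u⟩
        have h2 : v ∈ e₀ ∩ P (ix u) := Finset.mem_inter.2 ⟨he₀S hv, h ▸ hix v⟩
        exact Finset.card_le_one.1 (le_of_eq (hpart e₀ he₀E (ix u))) u h1 v h2
      set T := S.image ix with hT
      have hTcard : T.card = U.card + 1 := by
        rw [hT, Finset.card_image_of_injOn hixinj, hScard]
      set Q : Fin r → Finset V := fun j =>
        if j ∈ T then S.filter (fun s => ix s = j) else P j with hQ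
      set ψ : Finset V → (Fin r → V) := fun e j =>
        if h : (e ∩ P j).Nonempty then h.choose else Classical.arbitrary V with hψ
      have hmem : ∀ e ∈ E.filter (fun e => S ⊆ e), ∀ j,
          ψ e j ∈ e ∩ P j ∧ ∀ v ∈ e ∩ P j, v = ψ e j := by
        intro e he j
        rw [Finset.mem_filter] at he
        have hc := hpart e he.1 j
        have hne2 : (e ∩ P j).Nonempty := Finset.card_pos.1 (by omega)
        refine ⟨?_, ?_⟩
        · simp only [hψ, dif_pos hne2]
          exact hne2.choose_spec
        · intro v hv
          simp only [hψ, dif_pos hne2]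
          exact Finset.card_le_one.1 (le_of_eq hc) v hv _ hne2.choose_spec
      have himg : ∀ e ∈ E.filter (fun e => S ⊆ e), e = Finset.univ.image (ψ e) := by
        intro e he
        apply Finset.Subset.antisymm
        · intro v hv
          have h1 : v ∈ e ∩ P (ix v) := Finset.mem_inter.2 ⟨hv, hix v⟩
          have h2 := (hmem e he (ix v)).2 v h1
          exact h2 ▸ Finset.mem_image_of_mem _ (Finset.mem_univ _)
        · intro v hv
          obtain ⟨j, _, rfl⟩ := Finset.mem_image.1 hv
          exact (Finset.mem_inter.1 (hmem e he j).1).1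
      have hmaps : ∀ e ∈ E.filter (fun e => S ⊆ e), ψ e ∈ Fintype.piFinset Q := by
        intro e he
        rw [Fintype.mem_piFinset]
        intro j
        by_cases hj : j ∈ T
        · rw [hT] at hj
          obtain ⟨s, hs, rfl⟩ := Finset.mem_image.1 hj
          have hse : s ∈ e ∩ P (ix s) :=
            Finset.mem_inter.2 ⟨(Finset.mem_filter.1 he).2 hs, hix s⟩
          have h2 := (hmem e he (ix s)).2 s hse
          have hjT : ix s ∈ T := by rw [hT]; exact Finset.mem_image_of_mem _ hs
          simp only [hQ, if_pos hjT]
          rw [← h2]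
          exact Finset.mem_filter.2 ⟨hs, rfl⟩
        · simp only [hQ, if_neg hj]
          exact (Finset.mem_inter.1 (hmem e he j).1).2
      have hinj : Set.InjOn ψ (E.filter (fun e => S ⊆ e)) := by
        intro a ha b hb h
        rw [himg a ha, himg b hb, h]
      have hcard := Finset.card_le_card_of_injOn ψ hmaps hinj
      have hQle : ∀ j, (Q j).card ≤ if j ∈ T then 1 else n := by
        intro j
        by_cases hj : j ∈ T
        · simp only [hQ, if_pos hj]
          apply Finset.card_le_one.2
          intro u hu v hv
          rw [Finset.mem_filter] at hu hv
          exact hixinj hu.1 hv.1 (hu.2.trans hv.2.symm)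
        · simp only [hQ, if_neg hj]
          exact hsizes j
      have hkk : k = r - (U.card + 1) := by omega
      have hprod : (Fintype.piFinset Q).card ≤ n ^ k := by
        rw [Fintype.card_piFinset]
        calc ∏ j, (Q j).card ≤ ∏ j, (if j ∈ T then 1 else n) :=
              Finset.prod_le_prod' (fun j _ => hQle j)
          _ = n ^ k := by
              rw [Finset.prod_ite]
              simp only [Finset.prod_const_one, Finset.prod_const, one_mul]
              have hfc : (Finset.univ.filter (fun j => ¬ j ∈ T)).card = r - (U.card + 1) := by
                have hcompl : Finset.univ.filter (fun j => ¬ j ∈ T) = Tᶜ := by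
                  ext j; simp
                rw [hcompl, Finset.card_compl, hTcard, Fintype.card_fin]
              rw [hfc, hkk]
      exact hcard.trans hprod
    · rw [Finset.not_nonempty_iff_eq_empty.1 hne]
      simp
  -- Lemma A: degree sum
  have hA : RD.degOn E U = ∑ w ∈ P i, RD.degOn E (insert w U) := by
    unfold RD.degOn
    simp only [Finset.card_filter]
    rw [Finset.sum_comm]
    apply Finset.sum_congr rfl
    intro e he
    by_cases hU : U ⊆ e
    · rw [if_pos hU]
      have hcongr : ∀ w ∈ P i, (if insert w U ⊆ e then 1 else 0) = if w ∈ e then 1 else 0 := by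
        intro w hw
        simp [Finset.insert_subset_iff, hU]
      rw [Finset.sum_congr rfl hcongr, ← Finset.card_filter,
        Finset.filter_mem_eq_inter, Finset.inter_comm]
      exact (hpart e he i).symm
    · rw [if_neg hU]
      symm
      apply Finset.sum_eq_zero
      intro w hw
      rw [if_neg]
      intro h
      exact hU ((Finset.subset_insert w U).trans h)
  -- main natural-number inequality
  have hmain : RD.degOn E U ≤ W.card * (n ^ k - t + 1) + n * (t - 1) := by
    rw [hA]
    have hstep : ∀ w ∈ P i, RD.degOn E (insert w U) ≤
        (if t ≤ RD.degOn E (insert w U) then n ^ k - t + 1 else 0) + (t - 1) := by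
      intro w hw
      have hb := hB w hw
      by_cases h : t ≤ RD.degOn E (insert w U)
      · rw [if_pos h]; omega
      · rw [if_neg h]; omega
    calc ∑ w ∈ P i, RD.degOn E (insert w U)
        ≤ ∑ w ∈ P i, ((if t ≤ RD.degOn E (insert w U) then n ^ k - t + 1 else 0) + (t - 1)) :=
          Finset.sum_le_sum hstep
      _ = (∑ w ∈ P i, (if t ≤ RD.degOn E (insert w U) then n ^ k - t + 1 else 0))
            + (P i).card * (t - 1) := by
          rw [Finset.sum_add_distrib, Finset.sum_const, smul_eq_mul]
      _ = W.card * (n ^ k - t + 1) + (P i).card * (t - 1) := by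
          rw [← Finset.sum_filter, Finset.sum_const, smul_eq_mul, hW]
      _ ≤ W.card * (n ^ k - t + 1) + n * (t - 1) := by
          exact Nat.add_le_add_left (Nat.mul_le_mul_right _ (hsizes i)) _
  -- pass to the reals
  have htr : (t : ℝ) ≤ (n : ℝ) ^ k := by
    exact_mod_cast hpow
  have hD : (0 : ℝ) < (n : ℝ) ^ k - (t : ℝ) + 1 := by linarith
  rw [div_le_iff₀ hD]
  have hcast : (RD.degOn E U : ℝ) ≤ (W.card : ℝ) * ((n : ℝ) ^ k - (t : ℝ) + 1)
      + (n : ℝ) * ((t : ℝ) - 1) := by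
    have h1 : ((W.card * (n ^ k - t + 1) + n * (t - 1) : ℕ) : ℝ)
        = (W.card : ℝ) * ((n : ℝ) ^ k - (t : ℝ) + 1) + (n : ℝ) * ((t : ℝ) - 1) := by
      rw [Nat.cast_add, Nat.cast_mul, Nat.cast_mul, Nat.cast_add, Nat.cast_sub hpow,
        Nat.cast_sub ht, Nat.cast_pow, Nat.cast_one]
    rw [← h1]
    exact_mod_cast hmain
  nlinarith [hcast]
end

section
/- Let r ≥ 2, and let m, k, t be positive integers with m > 10kt. Let F be an r-graph on the vertex set [t] and let G be an r-graph admitting a partition (𝒱,F) with 𝒱 = (V₁,…,V_t). Fix i ∈ [t], let U₁ ⊆ V_i be an (F,m,k)-closed set of size at least m + 10kt, and let U₂ ⊆ V_i be a set disjoint from U₁. Suppose that for every W ⊆ V(G) with |W ∩ V_j| ≤ m − kt for all j ∈ [t] and every v ∈ U₂, there exist two vertex-disjoint 𝒱-transversal copies F₁, F₂ of F in G − W such that (1) V(F₁) ∩ V_i ⊆ U₁ and V(F₂) ∩ V_i = {v}, and (2) for every j ∈ [t]∖{i}, the vertex of F₁ in V_j and the vertex of F₂ in V_j are (F,m,k)-reachable.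 Then U₁ ∪ U₂ is (F, m−10kt, 6kt)-closed. -/
open Finset
open scoped Classical

set_option linter.unusedSectionVars false
set_option maxHeartbeats 1000000

namespace RD

variable {V : Type} [DecidableEq V] [Fintype V]
variable {ι : Type} [DecidableEq ι] [Fintype ι]
variable {E : Finset (Finset V)} {F : Finset (Finset ι)} {P : ι → Finset V}

lemma factor_of_family {A : Type} [Fintype A] [DecidableEq A] (ψ : A → ι → V)
    (hc : ∀ a, IsTransversalCopy E F P (ψ a))
    (hd : ∀ a b, a ≠ b →
      Disjoint (Finset.image (ψ a) Finset.univ) (Finset.image (ψ b) Finset.univ)) :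
    HasTransversalFactor E F P
      (Finset.univ.biUnion fun a => Finset.image (ψ a) Finset.univ) := by
  classical
  let e := (Fintype.equivFin A).symm
  refine ⟨Fintype.card A, fun a => ψ (e a), fun a => hc (e a), ?_, ?_⟩
  · intro a b hab
    exact hd (e a) (e b) (fun h => hab (e.injective h))
  · ext x
    simp only [Finset.mem_biUnion, Finset.mem_univ, true_and]
    constructor
    · rintro ⟨a, hx⟩; exact ⟨e a, hx⟩
    · rintro ⟨a, hx⟩; exact ⟨e.symm a, by simpa using hx⟩


lemma copy_factor {ψ : ι → V} (h : IsTransversalCopy E F P ψ) :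
    HasTransversalFactor E F P (Finset.image ψ Finset.univ) := by
  refine ⟨1, fun _ => ψ, fun _ => h, ?_, ?_⟩
  · intro a b hab; exact absurd (Subsingleton.elim a b) hab
  · simp


lemma factor_empty : HasTransversalFactor E F P (∅ : Finset V) := by
  refine ⟨0, fun a => a.elim0, fun a => a.elim0, fun a => a.elim0, ?_⟩
  simp


lemma factor_union {S₁ S₂ : Finset V} (h₁ : HasTransversalFactor E F P S₁)
    (h₂ : HasTransversalFactor E F P S₂) (hdis : Disjoint S₁ S₂) :
    HasTransversalFactor E F P (S₁ ∪ S₂) := by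
  obtain ⟨k₁, ψ₁, hc₁, hd₁, hu₁⟩ := h₁
  obtain ⟨k₂, ψ₂, hc₂, hd₂, hu₂⟩ := h₂
  have hsub₁ : ∀ a', Finset.image (ψ₁ a') Finset.univ ⊆ S₁ := by
    intro a'; rw [← hu₁]
    exact Finset.subset_biUnion_of_mem (fun a => Finset.image (ψ₁ a) Finset.univ)
      (Finset.mem_univ a')
  have hsub₂ : ∀ a', Finset.image (ψ₂ a') Finset.univ ⊆ S₂ := by
    intro a'; rw [← hu₂]
    exact Finset.subset_biUnion_of_mem (fun a => Finset.image (ψ₂ a) Finset.univ)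
      (Finset.mem_univ a')
  have key := factor_of_family (E := E) (F := F) (P := P)
    (A := Fin k₁ ⊕ Fin k₂) (Sum.elim ψ₁ ψ₂) ?_ ?_
  · convert key using 1
    ext x
    simp only [Finset.mem_union, Finset.mem_biUnion, Finset.mem_univ, true_and]
    constructor
    · rintro (hx | hx)
      · rw [← hu₁] at hx
        obtain ⟨a, -, hx⟩ := Finset.mem_biUnion.1 hx
        exact ⟨Sum.inl a, hx⟩
      · rw [← hu₂] at hx
        obtain ⟨a, -, hx⟩ := Finset.mem_biUnion.1 hx
        exact ⟨Sum.inr a, hx⟩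
    · rintro ⟨(a | a), hx⟩
      · exact Or.inl (hsub₁ a hx)
      · exact Or.inr (hsub₂ a hx)
  · rintro (a | a)
    · exact hc₁ a
    · exact hc₂ a
  · rintro (a | a) (b | b) hab
    · exact hd₁ a b (fun h => hab (by rw [h]))
    · exact hdis.mono (hsub₁ a) (hsub₂ b)
    · exact (hdis.mono (hsub₁ b) (hsub₂ a)).symm
    · exact hd₂ a b (fun h => hab (by rw [h]))


lemma factor_biUnion {ι' : Type} [DecidableEq ι'] (J : Finset ι') (T : ι' → Finset V)
    (hfac : ∀ l ∈ J, HasTransversalFactor E F P (T l))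
    (hd : ∀ l ∈ J, ∀ l' ∈ J, l ≠ l' → Disjoint (T l) (T l')) :
    HasTransversalFactor E F P (J.biUnion T) := by
  induction J using Finset.induction_on with
  | empty => simpa using factor_empty
  | @insert a s hnotmem ih =>
    rw [Finset.biUnion_insert]
    refine factor_union (hfac a (Finset.mem_insert_self a s)) (ih ?_ ?_) ?_
    · intro l hl; exact hfac l (Finset.mem_insert_of_mem hl)
    · intro l hl l' hl' hne
      exact hd l (Finset.mem_insert_of_mem hl) l' (Finset.mem_insert_of_mem hl') hne
    · rw [Finset.disjoint_biUnion_right]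
      intro l hl
      exact hd a (Finset.mem_insert_self a s) l (Finset.mem_insert_of_mem hl)
        (fun h => hnotmem (h ▸ hl))



lemma part_card (hP : ∀ i j : ι, i ≠ j → Disjoint (P i) (P j)) {T : Finset V}
    (h : HasTransversalFactor E F P T) (p : ι) :
    (T ∩ P p).card * Fintype.card ι = T.card := by
  obtain ⟨n, ψ, hc, hd, hu⟩ := h
  have himg : ∀ a, Finset.image (ψ a) Finset.univ ∩ P p = {ψ a p} := by
    intro a
    ext x
    simp only [Finset.mem_inter, Finset.mem_image, Finset.mem_univ, true_and,
      Finset.mem_singleton]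
    constructor
    · rintro ⟨⟨q, rfl⟩, hxp⟩
      by_cases hq : q = p
      · rw [hq]
      · exact absurd hxp (Finset.disjoint_left.1 (hP q p hq) ((hc a).2.1 q))
    · rintro rfl
      exact ⟨⟨p, rfl⟩, (hc a).2.1 p⟩
  have h1 : T ∩ P p = Finset.univ.biUnion (fun a => {ψ a p}) := by
    rw [← hu, Finset.biUnion_inter]
    exact Finset.biUnion_congr rfl (fun a _ => himg a)
  have hcard1 : (T ∩ P p).card = n := by
    rw [h1, Finset.card_biUnion]
    · simp
    · intro a _ b _ hab
      have hdd := Finset.disjoint_left.1 (hd a b hab)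
      rw [Function.onFun, Finset.disjoint_singleton]
      intro hEq
      exact hdd (Finset.mem_image_of_mem _ (Finset.mem_univ p))
        (hEq ▸ Finset.mem_image_of_mem _ (Finset.mem_univ p))
  have hcard2 : T.card = n * Fintype.card ι := by
    rw [← hu, Finset.card_biUnion]
    · rw [Finset.sum_congr rfl (fun a _ => Finset.card_image_of_injective Finset.univ (hc a).1)]
      simp [mul_comm]
    · intro a _ b _ hab; exact hd a b hab
  rw [hcard1, hcard2]


lemma reachable_mono {m m' : ℝ} {k k' : ℕ} (hm : m' ≤ m)
    (hk : k * Fintype.card ι - 1 ≤ k' * Fintype.card ι - 1) {u v : V}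
    (h : Reachable E F P m k u v) : Reachable E F P m' k' u v := by
  intro W hW hWc
  obtain ⟨S, h1, h2, h3, h4⟩ := h W hW (fun j => le_trans (hWc j) hm)
  exact ⟨S, h1, le_trans h2 hk, h3, h4⟩


lemma reachable_symm {m : ℝ} {k : ℕ} {u v : V}
    (h : Reachable E F P m k u v) : Reachable E F P m k v u := by
  intro W hW hWc
  rw [Finset.pair_comm v u] at hW
  obtain ⟨S, h1, h2, h3, h4⟩ := h W hW hWc
  rw [Finset.pair_comm u v] at h1
  exact ⟨S, h1, h2, h4, h3⟩



lemma card_inter_union_le (X Y Z : Finset V) :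
    ((X ∪ Y) ∩ Z).card ≤ (X ∩ Z).card + (Y ∩ Z).card := by
  rw [Finset.union_inter_distrib_right]
  exact Finset.card_union_le _ _


lemma chain (hP : ∀ i j : ι, i ≠ j → Disjoint (P i) (P j))
    (k : ℕ) (m : ℝ) (hkt : 1 ≤ k * Fintype.card ι)
    {ι' : Type} [DecidableEq ι'] (J : Finset ι') :
    ∀ (W : Finset V) (a b : ι' → V),
    (∀ j ∈ J, Reachable E F P m k (a j) (b j)) →
    (∀ j ∈ J, a j ∉ W ∧ b j ∉ W) →
    (∀ j ∈ J, ∀ l ∈ J, j ≠ l → a j ≠ a l ∧ a j ≠ b l ∧ b j ≠ a l ∧ b j ≠ b l) →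
    (∀ p : ι, ((W ∩ P p).card : ℝ) + (k + 2) * J.card ≤ m) →
    ∃ S : ι' → Finset V,
      (∀ j ∈ J, HasTransversalFactor E F P (insert (a j) (S j)) ∧
        HasTransversalFactor E F P (insert (b j) (S j)) ∧
        (S j).card ≤ k * Fintype.card ι - 1 ∧ Disjoint (S j) W) ∧
      (∀ j ∈ J, ∀ l ∈ J, a l ∉ S j ∧ b l ∉ S j) ∧
      (∀ j ∈ J, ∀ l ∈ J, j ≠ l → Disjoint (S j) (S l)) := by
  have htpos : 0 < Fintype.card ι := by
    by_contra h
    simp only [not_lt, Nat.le_zero] at h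
    rw [h, mul_zero] at hkt
    exact absurd hkt (by norm_num)
  induction J using Finset.induction_on with
  | empty =>
    intro W a b _ _ _ _
    exact ⟨fun _ => ∅, by simp, by simp, by simp⟩
  | @insert j₀ s hj₀ ih =>
    intro W a b hreach hW hdis hcard
    have hj₀mem : j₀ ∈ insert j₀ s := Finset.mem_insert_self j₀ s
    have hmem : ∀ l ∈ s, l ∈ insert j₀ s := fun l hl => Finset.mem_insert_of_mem hl
    have hne₀ : ∀ l ∈ s, j₀ ≠ l := fun l hl h => hj₀ (h ▸ hl)
    set Epts := s.biUnion (fun l => ({a l, b l} : Finset V)) with hEpts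
    have hEptsmem : ∀ x, x ∈ Epts ↔ ∃ l ∈ s, x = a l ∨ x = b l := by
      intro x
      simp only [hEpts, Finset.mem_biUnion, Finset.mem_insert, Finset.mem_singleton]
    set W₀ := W ∪ Epts with hW₀
    have hcardins : ((insert j₀ s).card : ℝ) = s.card + 1 := by
      rw [Finset.card_insert_of_notMem hj₀]; push_cast; ring
    -- a j₀, b j₀ not in W₀
    have haW₀ : a j₀ ∉ W₀ ∧ b j₀ ∉ W₀ := by
      constructor
      · intro h
        rcases Finset.mem_union.1 h with h | h
        · exact (hW j₀ hj₀mem).1 h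
        · obtain ⟨l, hl, h | h⟩ := (hEptsmem _).1 h
          · exact (hdis j₀ hj₀mem l (hmem l hl) (hne₀ l hl)).1 h
          · exact (hdis j₀ hj₀mem l (hmem l hl) (hne₀ l hl)).2.1 h
      · intro h
        rcases Finset.mem_union.1 h with h | h
        · exact (hW j₀ hj₀mem).2 h
        · obtain ⟨l, hl, h | h⟩ := (hEptsmem _).1 h
          · exact (hdis j₀ hj₀mem l (hmem l hl) (hne₀ l hl)).2.2.1 h
          · exact (hdis j₀ hj₀mem l (hmem l hl) (hne₀ l hl)).2.2.2 h
    have hW₀card : ∀ p : ι, ((W₀ ∩ P p).card : ℝ) ≤ m := by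
      intro p
      have h1 : (W₀ ∩ P p).card ≤ (W ∩ P p).card + (Epts ∩ P p).card :=
        card_inter_union_le W Epts (P p)
      have h2 : (Epts ∩ P p).card ≤ 2 * s.card := by
        calc (Epts ∩ P p).card ≤ Epts.card := Finset.card_le_card (Finset.inter_subset_left)
        _ ≤ ∑ l ∈ s, ({a l, b l} : Finset V).card := Finset.card_biUnion_le
        _ ≤ ∑ l ∈ s, 2 := Finset.sum_le_sum (fun l _ => Finset.card_insert_le _ _ |>.trans (by simp))
        _ = 2 * s.card := by rw [Finset.sum_const, smul_eq_mul, mul_comm]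
      have h3 := hcard p
      rw [hcardins] at h3
      have hk0 : (0:ℝ) ≤ k := Nat.cast_nonneg k
      have : ((W₀ ∩ P p).card : ℝ) ≤ ((W ∩ P p).card : ℝ) + 2 * s.card := by
        have := h1.trans (Nat.add_le_add_left h2 _)
        exact_mod_cast this
      nlinarith [Nat.cast_nonneg (α := ℝ) s.card]
    obtain ⟨S₀, hS₀sub, hS₀card, hS₀a, hS₀b⟩ := hreach j₀ hj₀mem W₀
      (by
        intro x hx
        simp only [Finset.mem_sdiff, Finset.mem_univ, true_and, Finset.mem_insert,
          Finset.mem_singleton]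
        rintro (rfl | rfl)
        · exact haW₀.1 hx
        · exact haW₀.2 hx)
      hW₀card
    have hS₀notin : ∀ x ∈ S₀, x ∉ W₀ ∧ x ≠ a j₀ ∧ x ≠ b j₀ := by
      intro x hx
      have := hS₀sub hx
      simp only [Finset.mem_sdiff, Finset.mem_univ, true_and, Finset.mem_union,
        Finset.mem_insert, Finset.mem_singleton] at this
      push_neg at this
      exact this
    -- per-part bound on S₀
    have hS₀part : ∀ p : ι, (S₀ ∩ P p).card ≤ k := by
      intro p
      have h1 : ((insert (a j₀) S₀ ∩ P p).card) * Fintype.card ι = (insert (a j₀) S₀).card :=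
        part_card hP hS₀a p
      have h2 : (insert (a j₀) S₀).card ≤ k * Fintype.card ι := by
        have := Finset.card_insert_le (a j₀) S₀
        omega
      have h3 : (insert (a j₀) S₀ ∩ P p).card ≤ k := by
        refine Nat.le_of_mul_le_mul_right ?_ htpos
        rw [h1]; exact h2
      calc (S₀ ∩ P p).card ≤ (insert (a j₀) S₀ ∩ P p).card :=
            Finset.card_le_card (Finset.inter_subset_inter (Finset.subset_insert _ _) le_rfl)
        _ ≤ k := h3
    set W' := W ∪ (insert (a j₀) (insert (b j₀) S₀)) with hW'
    have hW'card : ∀ p : ι, ((W' ∩ P p).card : ℝ) + (k + 2) * s.card ≤ m := by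
      intro p
      have h1 : (W' ∩ P p).card ≤ (W ∩ P p).card + ((insert (a j₀) (insert (b j₀) S₀)) ∩ P p).card :=
        card_inter_union_le _ _ _
      have h2 : ((insert (a j₀) (insert (b j₀) S₀)) ∩ P p).card ≤ (S₀ ∩ P p).card + 2 := by
        have hsub : (insert (a j₀) (insert (b j₀) S₀)) ∩ P p ⊆
            insert (a j₀) (insert (b j₀) (S₀ ∩ P p)) := by
          intro x hx
          simp only [Finset.mem_inter, Finset.mem_insert] at hx ⊢
          tauto
        calc ((insert (a j₀) (insert (b j₀) S₀)) ∩ P p).card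
            ≤ (insert (a j₀) (insert (b j₀) (S₀ ∩ P p))).card := Finset.card_le_card hsub
        _ ≤ (insert (b j₀) (S₀ ∩ P p)).card + 1 := Finset.card_insert_le _ _
        _ ≤ (S₀ ∩ P p).card + 2 := by
            have := Finset.card_insert_le (b j₀) (S₀ ∩ P p)
            omega
      have h3 := hcard p
      rw [hcardins] at h3
      have h4 := hS₀part p
      have : ((W' ∩ P p).card : ℝ) ≤ ((W ∩ P p).card : ℝ) + k + 2 := by
        have := h1.trans (Nat.add_le_add_left (h2.trans (Nat.add_le_add_right h4 2)) _)
        exact_mod_cast this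
      nlinarith [Nat.cast_nonneg (α := ℝ) s.card]
    obtain ⟨S, ihA, ihB, ihC⟩ := ih W' a b
      (fun l hl => hreach l (hmem l hl))
      (by
        intro l hl
        have hd := hdis l (hmem l hl) j₀ hj₀mem (fun h => hne₀ l hl h.symm)
        constructor
        · intro h
          rcases Finset.mem_union.1 h with h | h
          · exact (hW l (hmem l hl)).1 h
          · simp only [Finset.mem_insert] at h
            rcases h with h | h | h
            · exact hd.1 h
            · exact hd.2.1 h
            · exact (hS₀notin _ h).1 (Finset.mem_union_right _ ((hEptsmem _).2 ⟨l, hl, Or.inl rfl⟩))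
        · intro h
          rcases Finset.mem_union.1 h with h | h
          · exact (hW l (hmem l hl)).2 h
          · simp only [Finset.mem_insert] at h
            rcases h with h | h | h
            · exact hd.2.2.1 h
            · exact hd.2.2.2 h
            · exact (hS₀notin _ h).1 (Finset.mem_union_right _ ((hEptsmem _).2 ⟨l, hl, Or.inr rfl⟩)))
      (fun j hj l hl => hdis j (hmem j hj) l (hmem l hl))
      hW'card
    refine ⟨Function.update S j₀ S₀, ?_, ?_, ?_⟩
    · intro j hj
      rcases Finset.mem_insert.1 hj with rfl | hj'
      · rw [Function.update_self]
        refine ⟨hS₀a, hS₀b, hS₀card, ?_⟩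
        rw [Finset.disjoint_left]
        intro x hx
        exact fun hxW => (hS₀notin x hx).1 (Finset.mem_union_left _ hxW)
      · rw [Function.update_of_ne (fun h => hne₀ j hj' h.symm)]
        obtain ⟨f1, f2, f3, f4⟩ := ihA j hj'
        exact ⟨f1, f2, f3, f4.mono_right (Finset.subset_union_left)⟩
    · intro j hj l hl
      rcases Finset.mem_insert.1 hj with rfl | hj'
      · rw [Function.update_self]
        rcases Finset.mem_insert.1 hl with rfl | hl'
        · exact ⟨fun h => (hS₀notin _ h).2.1 rfl, fun h => (hS₀notin _ h).2.2 rfl⟩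
        · exact ⟨fun h => (hS₀notin _ h).1
              (Finset.mem_union_right _ ((hEptsmem _).2 ⟨l, hl', Or.inl rfl⟩)),
            fun h => (hS₀notin _ h).1
              (Finset.mem_union_right _ ((hEptsmem _).2 ⟨l, hl', Or.inr rfl⟩))⟩
      · rw [Function.update_of_ne (fun h => hne₀ j hj' h.symm)]
        rcases Finset.mem_insert.1 hl with rfl | hl'
        · have hdj := (ihA j hj').2.2.2
          rw [Finset.disjoint_left] at hdj
          exact ⟨fun h => hdj h (Finset.mem_union_right _ (Finset.mem_insert_self _ _)),
            fun h => hdj h (Finset.mem_union_right _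
              (Finset.mem_insert_of_mem (Finset.mem_insert_self _ _)))⟩
        · exact ihB j hj' l hl'
    · intro j hj l hl hne
      rcases Finset.mem_insert.1 hj with rfl | hj'
      · rw [Function.update_self]
        rcases Finset.mem_insert.1 hl with rfl | hl'
        · exact absurd rfl hne
        · rw [Function.update_of_ne (fun h => hne₀ l hl' h.symm)]
          have hdl := (ihA l hl').2.2.2
          rw [Finset.disjoint_left]
          intro x hx hxl
          rw [Finset.disjoint_left] at hdl
          exact hdl hxl (Finset.mem_union_right _
            (Finset.mem_insert_of_mem (Finset.mem_insert_of_mem hx)))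
      · rw [Function.update_of_ne (fun h => hne₀ j hj' h.symm)]
        rcases Finset.mem_insert.1 hl with rfl | hl'
        · rw [Function.update_self]
          have hdj := (ihA j hj').2.2.2
          rw [Finset.disjoint_left] at hdj ⊢
          intro x hx hxl
          exact hdj hx (Finset.mem_union_right _
            (Finset.mem_insert_of_mem (Finset.mem_insert_of_mem hxl)))
        · rw [Function.update_of_ne (fun h => hne₀ l hl' h.symm)]
          exact ihC j hj' l hl' hne



lemma disjoint_insert_insert {x y : V} {s t : Finset V} (hxy : x ≠ y) (hxt : x ∉ t)
    (hys : y ∉ s) (hst : Disjoint s t) : Disjoint (insert x s) (insert y t) := by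
  rw [Finset.disjoint_insert_left, Finset.disjoint_insert_right, Finset.mem_insert]
  push_neg
  exact ⟨⟨hxy, hxt⟩, hys, hst⟩

lemma merge_key1 {t k m : ℕ} (ht : 1 ≤ t) (hk : 1 ≤ k)
    (F : Finset (Finset (Fin t))) (E : Finset (Finset V))
    (P : Fin t → Finset V) (hP : ∀ a b : Fin t, a ≠ b → Disjoint (P a) (P b))
    (i : Fin t) (U₁ U₂ : Finset V) (hU₁ : U₁ ⊆ P i) (hU₂ : U₂ ⊆ P i)
    (hclosed : ∀ a ∈ U₁, ∀ b ∈ U₁, a ≠ b → Reachable E F P (m : ℝ) k a b)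
    (hdisj : Disjoint U₁ U₂)
    (hyp : ∀ W : Finset V,
      (∀ j : Fin t, ((W ∩ P j).card : ℝ) ≤ (m : ℝ) - (k : ℝ) * t) →
      ∀ v ∈ U₂, ∃ ψ₁ ψ₂ : Fin t → V,
        IsTransversalCopy E F P ψ₁ ∧ IsTransversalCopy E F P ψ₂ ∧
        (∀ j, ψ₁ j ∉ W) ∧ (∀ j, ψ₂ j ∉ W) ∧
        Disjoint (Finset.image ψ₁ Finset.univ) (Finset.image ψ₂ Finset.univ) ∧
        ψ₁ i ∈ U₁ ∧ ψ₂ i = v ∧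
        ∀ j : Fin t, j ≠ i → Reachable E F P (m : ℝ) k (ψ₁ j) (ψ₂ j))
    (u : V) (hu : u ∈ U₁) (v : V) (hv : v ∈ U₂) (huv : u ≠ v) :
    Reachable E F P ((m : ℝ) - 10 * (k : ℝ) * t) (6 * k * t) u v := by
  intro W hWsub hWcard
  have hcard_fin : Fintype.card (Fin t) = t := Fintype.card_fin t
  have hk1 : (1:ℝ) ≤ (k:ℝ) := by exact_mod_cast hk
  have ht1 : (1:ℝ) ≤ (t:ℝ) := by exact_mod_cast ht
  have hkt : 1 ≤ k * t := le_trans (by norm_num) (Nat.mul_le_mul hk ht)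
  have huW : u ∉ W := fun h =>
    (Finset.mem_sdiff.1 (hWsub h)).2 (Finset.mem_insert_self u {v})
  have hvW : v ∉ W := fun h =>
    (Finset.mem_sdiff.1 (hWsub h)).2
      (Finset.mem_insert_of_mem (Finset.mem_singleton_self v))
  have hinter : ∀ (x : V) (X : Finset V) (p : Fin t),
      ((insert x X) ∩ P p).card ≤ (X ∩ P p).card + 1 := by
    intro x X p
    have : (insert x X) ∩ P p ⊆ insert x (X ∩ P p) := by
      intro y hy
      simp only [Finset.mem_inter, Finset.mem_insert] at hy ⊢
      tauto
    exact (Finset.card_le_card this).trans (Finset.card_insert_le _ _)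
  -- apply hyp with W' = insert u W
  obtain ⟨ψ₁, ψ₂, hc₁, hc₂, hψ₁W, hψ₂W, hψd, hx1, hx2, hpairs⟩ :=
    hyp (insert u W) (by
      intro j
      have h1 := hinter u W j
      have h2 := hWcard j
      have h3 : (((insert u W) ∩ P j).card : ℝ) ≤ ((W ∩ P j).card : ℝ) + 1 := by
        exact_mod_cast h1
      nlinarith) v hv
  have hψ₁Wu : ∀ j, ψ₁ j ∉ W ∧ ψ₁ j ≠ u := by
    intro j
    have := hψ₁W j
    simp only [Finset.mem_insert, not_or] at this
    exact ⟨this.2, this.1⟩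
  have hψ₂Wu : ∀ j, ψ₂ j ∉ W ∧ ψ₂ j ≠ u := by
    intro j
    have := hψ₂W j
    simp only [Finset.mem_insert, not_or] at this
    exact ⟨this.2, this.1⟩
  have hψ12 : ∀ j l, ψ₁ j ≠ ψ₂ l := by
    intro j l h
    refine Finset.disjoint_left.1 hψd (Finset.mem_image_of_mem _ (Finset.mem_univ j)) ?_
    rw [h]
    exact Finset.mem_image_of_mem _ (Finset.mem_univ l)
  have hψ₁v : ∀ j, ψ₁ j ≠ v := by
    intro j h
    by_cases hji : j = i
    · rw [hji] at h
      exact Finset.disjoint_left.1 hdisj (h ▸ hx1) hv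
    · exact Finset.disjoint_left.1 (hP j i hji) ((hc₁.2.1) j) (h ▸ hU₂ hv)
  have hψ₂v : ∀ j, j ≠ i → ψ₂ j ≠ v := by
    intro j hji h
    exact hji (hc₂.1 (by rw [h, hx2]))
  set b : Fin t → V := fun j => if j = i then u else ψ₂ j with hbdef
  have hbu : b i = u := if_pos rfl
  have hbj : ∀ j, j ≠ i → b j = ψ₂ j := fun j hj => if_neg hj
  have hbne : ∀ j l, j ≠ l → b j ≠ b l := by
    intro j l hjl h
    by_cases hji : j = i
    · by_cases hli : l = i
      · exact hjl (hji.trans hli.symm)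
      · rw [hji, hbu, hbj l hli] at h
        exact (hψ₂Wu l).2 h.symm
    · by_cases hli : l = i
      · rw [hli, hbu, hbj j hji] at h
        exact (hψ₂Wu j).2 h
      · rw [hbj j hji, hbj l hli] at h
        exact hjl (hc₂.1 h)
  -- chain
  obtain ⟨S, hSfac, hSep, hSdj⟩ := chain hP k (m : ℝ)
    (by rw [hcard_fin]; exact hkt) (Finset.univ : Finset (Fin t)) (insert v W) ψ₁ b
    (by
      intro j _
      by_cases hji : j = i
      · rw [hji, hbu]
        exact hclosed (ψ₁ i) hx1 u hu (hψ₁Wu i).2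
      · rw [hbj j hji]
        exact hpairs j hji)
    (by
      intro j _
      constructor
      · simp only [Finset.mem_insert, not_or]
        exact ⟨hψ₁v j, (hψ₁Wu j).1⟩
      · by_cases hji : j = i
        · rw [hji, hbu]
          simp only [Finset.mem_insert, not_or]
          exact ⟨huv, huW⟩
        · rw [hbj j hji]
          simp only [Finset.mem_insert, not_or]
          exact ⟨hψ₂v j hji, (hψ₂Wu j).1⟩)
    (by
      intro j _ l _ hjl
      refine ⟨fun h => hjl (hc₁.1 h), ?_, ?_, ?_⟩
      · by_cases hli : l = i
        · rw [hli, hbu]; exact (hψ₁Wu j).2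
        · rw [hbj l hli]; exact hψ12 j l
      · by_cases hji : j = i
        · rw [hji, hbu]; exact fun h => (hψ₁Wu l).2 h.symm
        · rw [hbj j hji]; exact fun h => hψ12 l j h.symm
      · exact hbne j l hjl)
    (by
      intro p
      rw [Finset.card_univ, hcard_fin]
      have h1 : (((insert v W) ∩ P p).card : ℝ) ≤ ((W ∩ P p).card : ℝ) + 1 := by
        exact_mod_cast hinter v W p
      have h2 := hWcard p
      nlinarith)
  have hmemU : ∀ j : Fin t, j ∈ (Finset.univ : Finset (Fin t)) := fun j => Finset.mem_univ j
  -- properties of S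
  have hSW : ∀ j, Disjoint (S j) (insert v W) := fun j => (hSfac j (hmemU j)).2.2.2
  have hSv : ∀ j, v ∉ S j := by
    intro j h
    exact Finset.disjoint_left.1 (hSW j) h (Finset.mem_insert_self v W)
  have hSWonly : ∀ j, ∀ x ∈ S j, x ∉ W := by
    intro j x hx hxW
    exact Finset.disjoint_left.1 (hSW j) hx (Finset.mem_insert_of_mem hxW)
  have hSu : ∀ j, u ∉ S j := by
    intro j h
    have := (hSep j (hmemU j) i (hmemU i)).2
    rw [hbu] at this
    exact this h
  have hSa : ∀ j l, ψ₁ l ∉ S j := fun j l => (hSep j (hmemU j) l (hmemU l)).1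
  have hSb : ∀ j l, b l ∉ S j := fun j l => (hSep j (hmemU j) l (hmemU l)).2
  have hSψ₂ : ∀ j l, ψ₂ l ∉ S j := by
    intro j l h
    by_cases hli : l = i
    · subst hli; rw [hx2] at h; exact hSv j h
    · exact hSb j l (by rw [hbj l hli]; exact h)
  have hScard : ∀ j, (S j).card ≤ k * t - 1 := by
    intro j
    have := (hSfac j (hmemU j)).2.2.1
    rwa [hcard_fin] at this
  set T₁ : Fin t → Finset V := fun j => insert (ψ₁ j) (S j) with hT₁def
  set T₂ : Fin t → Finset V := fun j => insert (b j) (S j) with hT₂def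
  set Stot : Finset V :=
    Finset.univ.biUnion T₁ ∪ (Finset.image ψ₂ Finset.univ \ {v}) with hStot
  -- factor on insert v Stot
  have heqv : insert v Stot = Finset.image ψ₂ Finset.univ ∪ Finset.univ.biUnion T₁ := by
    ext x
    simp only [hStot, Finset.mem_insert, Finset.mem_union, Finset.mem_sdiff,
      Finset.mem_singleton]
    constructor
    · rintro (rfl | h | ⟨h, -⟩)
      · exact Or.inl (by rw [← hx2]; exact Finset.mem_image_of_mem _ (Finset.mem_univ i))
      · exact Or.inr h
      · exact Or.inl h
    · rintro (h | h)
      · by_cases hxv : x = v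
        · exact Or.inl hxv
        · exact Or.inr (Or.inr ⟨h, hxv⟩)
      · exact Or.inr (Or.inl h)
  have hT₁disj : ∀ j ∈ (Finset.univ : Finset (Fin t)), ∀ l ∈ (Finset.univ : Finset (Fin t)),
      j ≠ l → Disjoint (T₁ j) (T₁ l) := by
    intro j _ l _ hjl
    exact disjoint_insert_insert (fun h => hjl (hc₁.1 h)) (hSa l j) (hSa j l)
      (hSdj j (hmemU j) l (hmemU l) hjl)
  have hfv : HasTransversalFactor E F P (insert v Stot) := by
    rw [heqv]
    refine factor_union (copy_factor hc₂) (factor_biUnion _ _ ?_ hT₁disj) ?_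
    · intro j _; exact (hSfac j (hmemU j)).1
    · rw [Finset.disjoint_biUnion_right]
      intro j _
      rw [Finset.disjoint_left]
      intro x hx hx'
      obtain ⟨l, -, rfl⟩ := Finset.mem_image.1 hx
      rcases Finset.mem_insert.1 hx' with h | h
      · exact hψ12 j l h.symm
      · exact hSψ₂ j l h
  -- factor on insert u Stot
  have hequ : insert u Stot = Finset.image ψ₁ Finset.univ ∪ Finset.univ.biUnion T₂ := by
    ext x
    simp only [hStot, Finset.mem_insert, Finset.mem_union, Finset.mem_sdiff,
      Finset.mem_singleton, Finset.mem_biUnion, Finset.mem_univ, true_and, hT₁def, hT₂def,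
      Finset.mem_image]
    constructor
    · rintro (rfl | ⟨j, hj⟩ | ⟨⟨l, rfl⟩, hne⟩)
      · exact Or.inr ⟨i, Or.inl hbu.symm⟩
      · rcases hj with rfl | h
        · exact Or.inl ⟨j, rfl⟩
        · exact Or.inr ⟨j, Or.inr h⟩
      · have hli : l ≠ i := fun h => hne (by rw [h, hx2])
        exact Or.inr ⟨l, Or.inl (hbj l hli).symm⟩
    · rintro (⟨j, rfl⟩ | ⟨j, hj⟩)
      · exact Or.inr (Or.inl ⟨j, Or.inl rfl⟩)
      · rcases hj with rfl | h
        · by_cases hji : j = i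
          · rw [hji, hbu]; exact Or.inl rfl
          · rw [hbj j hji]
            exact Or.inr (Or.inr ⟨⟨j, rfl⟩, hψ₂v j hji⟩)
        · exact Or.inr (Or.inl ⟨j, Or.inr h⟩)
  have hT₂disj : ∀ j ∈ (Finset.univ : Finset (Fin t)), ∀ l ∈ (Finset.univ : Finset (Fin t)),
      j ≠ l → Disjoint (T₂ j) (T₂ l) := by
    intro j _ l _ hjl
    exact disjoint_insert_insert (hbne j l hjl) (hSb l j) (hSb j l)
      (hSdj j (hmemU j) l (hmemU l) hjl)
  have hfu : HasTransversalFactor E F P (insert u Stot) := by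
    rw [hequ]
    refine factor_union (copy_factor hc₁) (factor_biUnion _ _ ?_ hT₂disj) ?_
    · intro j _; exact (hSfac j (hmemU j)).2.1
    · rw [Finset.disjoint_biUnion_right]
      intro j _
      rw [Finset.disjoint_left]
      intro x hx hx'
      obtain ⟨l, -, rfl⟩ := Finset.mem_image.1 hx
      rcases Finset.mem_insert.1 hx' with h | h
      · by_cases hji : j = i
        · subst hji; rw [hbu] at h; exact (hψ₁Wu l).2 h
        · rw [hbj j hji] at h; exact hψ12 l j h
      · exact hSa j l h
  refine ⟨Stot, ?_, ?_, hfu, hfv⟩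
  · intro x hx
    simp only [Finset.mem_sdiff, Finset.mem_univ, true_and, Finset.mem_union,
      Finset.mem_insert, Finset.mem_singleton, not_or]
    simp only [hStot, Finset.mem_union, Finset.mem_biUnion, Finset.mem_univ, true_and,
      hT₁def, Finset.mem_sdiff, Finset.mem_singleton, Finset.mem_image] at hx
    rcases hx with ⟨j, hj⟩ | ⟨⟨l, -, rfl⟩, hne⟩
    · rcases Finset.mem_insert.1 hj with rfl | h
      · exact ⟨(hψ₁Wu j).1, (hψ₁Wu j).2, hψ₁v j⟩
      · exact ⟨hSWonly j x h, fun hxu => hSu j (hxu ▸ h), fun hxv => hSv j (hxv ▸ h)⟩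
    · exact ⟨(hψ₂Wu l).1, (hψ₂Wu l).2, hne⟩
  · rw [hcard_fin]
    have hT₁card : ∀ j, (T₁ j).card ≤ k * t := by
      intro j
      have h1 := Finset.card_insert_le (ψ₁ j) (S j)
      have h2 := hScard j
      simp only [hT₁def]
      omega
    have hbi : (Finset.univ.biUnion T₁).card ≤ t * (k * t) := by
      calc (Finset.univ.biUnion T₁).card ≤ ∑ j, (T₁ j).card := Finset.card_biUnion_le
      _ ≤ ∑ _j : Fin t, k * t := Finset.sum_le_sum (fun j _ => hT₁card j)
      _ = t * (k * t) := by rw [Finset.sum_const, Finset.card_univ, hcard_fin, smul_eq_mul]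
    have him : (Finset.image ψ₂ Finset.univ \ {v}).card ≤ t := by
      calc (Finset.image ψ₂ Finset.univ \ {v}).card
          ≤ (Finset.image ψ₂ Finset.univ).card := Finset.card_le_card (Finset.sdiff_subset)
      _ ≤ (Finset.univ : Finset (Fin t)).card := Finset.card_image_le
      _ = t := by rw [Finset.card_univ, hcard_fin]
    have hcc : Stot.card ≤ t * (k * t) + t := by
      calc Stot.card ≤ (Finset.univ.biUnion T₁).card +
          (Finset.image ψ₂ Finset.univ \ {v}).card := Finset.card_union_le _ _
      _ ≤ t * (k * t) + t := by omega
    have h6 : Stot.card + 1 ≤ 6 * k * t * t := by nlinarith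
    exact Nat.le_sub_of_add_le h6

lemma merge_key2 {t k m : ℕ} (ht : 1 ≤ t) (hk : 1 ≤ k)
    (F : Finset (Finset (Fin t))) (E : Finset (Finset V))
    (P : Fin t → Finset V) (hP : ∀ a b : Fin t, a ≠ b → Disjoint (P a) (P b))
    (i : Fin t) (U₁ U₂ : Finset V) (hU₁ : U₁ ⊆ P i) (hU₂ : U₂ ⊆ P i)
    (hclosed : ∀ a ∈ U₁, ∀ b ∈ U₁, a ≠ b → Reachable E F P (m : ℝ) k a b)
    (hdisj : Disjoint U₁ U₂)
    (hyp : ∀ W : Finset V,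
      (∀ j : Fin t, ((W ∩ P j).card : ℝ) ≤ (m : ℝ) - (k : ℝ) * t) →
      ∀ v ∈ U₂, ∃ ψ₁ ψ₂ : Fin t → V,
        IsTransversalCopy E F P ψ₁ ∧ IsTransversalCopy E F P ψ₂ ∧
        (∀ j, ψ₁ j ∉ W) ∧ (∀ j, ψ₂ j ∉ W) ∧
        Disjoint (Finset.image ψ₁ Finset.univ) (Finset.image ψ₂ Finset.univ) ∧
        ψ₁ i ∈ U₁ ∧ ψ₂ i = v ∧
        ∀ j : Fin t, j ≠ i → Reachable E F P (m : ℝ) k (ψ₁ j) (ψ₂ j))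
    (u : V) (hu : u ∈ U₂) (v : V) (hv : v ∈ U₂) (huv : u ≠ v) :
    Reachable E F P ((m : ℝ) - 10 * (k : ℝ) * t) (6 * k * t) u v := by
  intro W hWsub hWcard
  have hcard_fin : Fintype.card (Fin t) = t := Fintype.card_fin t
  have hk1 : (1:ℝ) ≤ (k:ℝ) := by exact_mod_cast hk
  have ht1 : (1:ℝ) ≤ (t:ℝ) := by exact_mod_cast ht
  have hkt : 1 ≤ k * t := le_trans (by norm_num) (Nat.mul_le_mul hk ht)
  have huW : u ∉ W := fun h =>
    (Finset.mem_sdiff.1 (hWsub h)).2 (Finset.mem_insert_self u {v})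
  have hvW : v ∉ W := fun h =>
    (Finset.mem_sdiff.1 (hWsub h)).2
      (Finset.mem_insert_of_mem (Finset.mem_singleton_self v))
  have hinter : ∀ (x : V) (X : Finset V) (p : Fin t),
      ((insert x X) ∩ P p).card ≤ (X ∩ P p).card + 1 := by
    intro x X p
    have : (insert x X) ∩ P p ⊆ insert x (X ∩ P p) := by
      intro y hy
      simp only [Finset.mem_inter, Finset.mem_insert] at hy ⊢
      tauto
    exact (Finset.card_le_card this).trans (Finset.card_insert_le _ _)
  have himcard : ∀ ψ : Fin t → V, ∀ p : Fin t,
      ((Finset.image ψ Finset.univ) ∩ P p).card ≤ t := by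
    intro ψ p
    calc ((Finset.image ψ Finset.univ) ∩ P p).card
        ≤ (Finset.image ψ Finset.univ).card :=
          Finset.card_le_card Finset.inter_subset_left
    _ ≤ (Finset.univ : Finset (Fin t)).card := Finset.card_image_le
    _ = t := by rw [Finset.card_univ, hcard_fin]
  -- first application of hyp: to u, blocking v
  obtain ⟨A₁, A₂, hcA₁, hcA₂, hA₁W, hA₂W, hAd, hA₁i, hA₂i, hApairs⟩ :=
    hyp (insert v W) (by
      intro j
      have h1 := hinter v W j
      have h2 := hWcard j
      have h3 : (((insert v W) ∩ P j).card : ℝ) ≤ ((W ∩ P j).card : ℝ) + 1 := by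
        exact_mod_cast h1
      nlinarith) u hu
  have hA₁Wv : ∀ j, A₁ j ∉ W ∧ A₁ j ≠ v := by
    intro j
    have := hA₁W j
    simp only [Finset.mem_insert, not_or] at this
    exact ⟨this.2, this.1⟩
  have hA₂Wv : ∀ j, A₂ j ∉ W ∧ A₂ j ≠ v := by
    intro j
    have := hA₂W j
    simp only [Finset.mem_insert, not_or] at this
    exact ⟨this.2, this.1⟩
  have hA12 : ∀ j l, A₁ j ≠ A₂ l := by
    intro j l h
    refine Finset.disjoint_left.1 hAd (Finset.mem_image_of_mem _ (Finset.mem_univ j)) ?_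
    rw [h]
    exact Finset.mem_image_of_mem _ (Finset.mem_univ l)
  have hA₁u : ∀ j, A₁ j ≠ u := fun j h => hA12 j i (h.trans hA₂i.symm)
  have hA₂u : ∀ j, j ≠ i → A₂ j ≠ u := by
    intro j hji h
    exact hji (hcA₂.1 (by rw [h, hA₂i]))
  -- second application of hyp: to v, blocking everything of A
  set W₂ : Finset V := insert v (W ∪ Finset.image A₁ Finset.univ ∪
    Finset.image A₂ Finset.univ) with hW₂def
  obtain ⟨B₁, B₂, hcB₁, hcB₂, hB₁W, hB₂W, hBd, hB₁i, hB₂i, hBpairs⟩ :=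
    hyp W₂ (by
      intro j
      have h1 := hinter v (W ∪ Finset.image A₁ Finset.univ ∪ Finset.image A₂ Finset.univ) j
      have h2 : ((W ∪ Finset.image A₁ Finset.univ ∪ Finset.image A₂ Finset.univ) ∩ P j).card
          ≤ (W ∩ P j).card + t + t := by
        have ha := card_inter_union_le (W ∪ Finset.image A₁ Finset.univ)
          (Finset.image A₂ Finset.univ) (P j)
        have hb := card_inter_union_le W (Finset.image A₁ Finset.univ) (P j)
        have hc := himcard A₁ j
        have hd := himcard A₂ j
        omega
      have h3 : ((W₂ ∩ P j).card : ℝ) ≤ ((W ∩ P j).card : ℝ) + 2 * t + 1 := by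
        rw [hW₂def]
        have h5 : (insert v (W ∪ Finset.image A₁ Finset.univ ∪
            Finset.image A₂ Finset.univ) ∩ P j).card ≤ (W ∩ P j).card + t + t + 1 := by
          omega
        have h6 := (Nat.cast_le (α := ℝ)).2 h5
        push_cast at h6
        linarith
      have h4 := hWcard j
      nlinarith) v hv
  have hBmem : ∀ x : V, x ∈ W₂ ↔ (x = v ∨ x ∈ W ∨ (∃ j, A₁ j = x) ∨ (∃ j, A₂ j = x)) := by
    intro x
    simp only [hW₂def, Finset.mem_insert, Finset.mem_union, Finset.mem_image,
      Finset.mem_univ, true_and]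
    tauto
  have hB₁W₂ : ∀ j, B₁ j ≠ v ∧ B₁ j ∉ W ∧ (∀ l, B₁ j ≠ A₁ l) ∧ (∀ l, B₁ j ≠ A₂ l) := by
    intro j
    have := hB₁W j
    rw [hBmem] at this
    push_neg at this
    exact ⟨this.1, this.2.1, fun l h => this.2.2.1 l h.symm, fun l h => this.2.2.2 l h.symm⟩
  have hB₂W₂ : ∀ j, B₂ j ≠ v ∧ B₂ j ∉ W ∧ (∀ l, B₂ j ≠ A₁ l) ∧ (∀ l, B₂ j ≠ A₂ l) := by
    intro j
    have := hB₂W j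
    rw [hBmem] at this
    push_neg at this
    exact ⟨this.1, this.2.1, fun l h => this.2.2.1 l h.symm, fun l h => this.2.2.2 l h.symm⟩
  have hB12 : ∀ j l, B₁ j ≠ B₂ l := by
    intro j l h
    refine Finset.disjoint_left.1 hBd (Finset.mem_image_of_mem _ (Finset.mem_univ j)) ?_
    rw [h]
    exact Finset.mem_image_of_mem _ (Finset.mem_univ l)
  have hB₁u : ∀ j, B₁ j ≠ u := fun j => hA₂i ▸ (hB₁W₂ j).2.2.2 i
  have hB₂u : ∀ j, B₂ j ≠ u := fun j => hA₂i ▸ (hB₂W₂ j).2.2.2 i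
  have hB₂v : ∀ j, j ≠ i → B₂ j ≠ v := by
    intro j hji h
    exact hji (hcB₂.1 (by rw [h, hB₂i]))
  have hA₁B₁ : (A₁ i : V) ≠ B₁ i := fun h => ((hB₁W₂ i).2.2.1 i) h.symm
  -- the pairs for the chain
  set a : Fin t × Bool → V := fun l => if l.2 = true then B₁ l.1 else A₁ l.1 with hadef
  set b : Fin t × Bool → V :=
    fun l => if l.2 = true then B₂ l.1 else (if l.1 = i then B₁ i else A₂ l.1) with hbdef
  have haf : ∀ j, a (j, false) = A₁ j := fun j => by simp [hadef]
  have hat : ∀ j, a (j, true) = B₁ j := fun j => by simp [hadef]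
  have hbf : ∀ j, j ≠ i → b (j, false) = A₂ j := fun j hji => by simp [hbdef, hji]
  have hbfi : b (i, false) = B₁ i := by simp [hbdef]
  have hbt : ∀ j, b (j, true) = B₂ j := fun j => by simp [hbdef]
  have hbfall : ∀ x : Fin t, (b (x, false) = B₁ i ∧ x = i) ∨
      (b (x, false) = A₂ x ∧ x ≠ i) := by
    intro x
    by_cases hxi : x = i
    · exact Or.inl ⟨by rw [hxi, hbfi], hxi⟩
    · exact Or.inr ⟨hbf x hxi, hxi⟩
  set J : Finset (Fin t × Bool) := Finset.univ.erase (i, true) with hJdef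
  have hJff : ∀ j, (j, false) ∈ J := by
    intro j
    simp [hJdef]
  have hJtt : ∀ j, j ≠ i → (j, true) ∈ J := by
    intro j hji
    simp [hJdef, hji]
  have hJmem : ∀ j (c : Bool), (j, c) ∈ J → c = true → j ≠ i := by
    intro j c hjc hc hji
    rw [hc, hji] at hjc
    exact (Finset.notMem_erase _ _) hjc
  -- chain hypotheses
  set Wc : Finset V := insert u (insert v W) with hWcdef
  have hreach : ∀ l ∈ J, Reachable E F P (m : ℝ) k (a l) (b l) := by
    rintro ⟨j, c⟩ hl
    cases c with
    | false =>
      by_cases hji : j = i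
      · rw [hji, haf, hbfi]
        exact hclosed (A₁ i) hA₁i (B₁ i) hB₁i hA₁B₁
      · rw [haf, hbf j hji]
        exact hApairs j hji
    | true =>
      have hji := hJmem j true hl rfl
      rw [hat, hbt]
      exact hBpairs j hji
  have hWend : ∀ l ∈ J, a l ∉ Wc ∧ b l ∉ Wc := by
    have hmemWc : ∀ x : V, x ∉ Wc ↔ (x ≠ u ∧ x ≠ v ∧ x ∉ W) := by
      intro x
      simp [hWcdef, not_or]
    rintro ⟨j, c⟩ hl
    cases c with
    | false =>
      constructor
      · rw [haf, hmemWc]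
        exact ⟨hA₁u j, (hA₁Wv j).2, (hA₁Wv j).1⟩
      · by_cases hji : j = i
        · rw [hji, hbfi, hmemWc]
          exact ⟨hB₁u i, (hB₁W₂ i).1, (hB₁W₂ i).2.1⟩
        · rw [hbf j hji, hmemWc]
          exact ⟨hA₂u j hji, (hA₂Wv j).2, (hA₂Wv j).1⟩
    | true =>
      have hji := hJmem j true hl rfl
      constructor
      · rw [hat, hmemWc]
        exact ⟨hB₁u j, (hB₁W₂ j).1, (hB₁W₂ j).2.1⟩
      · rw [hbt, hmemWc]
        exact ⟨hB₂u j, (hB₂W₂ j).1, (hB₂W₂ j).2.1⟩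
  have hdis : ∀ l ∈ J, ∀ l' ∈ J, l ≠ l' →
      a l ≠ a l' ∧ a l ≠ b l' ∧ b l ≠ a l' ∧ b l ≠ b l' := by
    rintro ⟨j, c⟩ hl ⟨j', c'⟩ hl' hne
    have hA₁A₁ : ∀ x y : Fin t, x ≠ y → A₁ x ≠ A₁ y := fun x y hxy h => hxy (hcA₁.1 h)
    have hA₂A₂ : ∀ x y : Fin t, x ≠ y → A₂ x ≠ A₂ y := fun x y hxy h => hxy (hcA₂.1 h)
    have hB₁B₁ : ∀ x y : Fin t, x ≠ y → B₁ x ≠ B₁ y := fun x y hxy h => hxy (hcB₁.1 h)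
    have hB₂B₂ : ∀ x y : Fin t, x ≠ y → B₂ x ≠ B₂ y := fun x y hxy h => hxy (hcB₂.1 h)
    have hA₁B₁' : ∀ x y : Fin t, A₁ x ≠ B₁ y := fun x y h => ((hB₁W₂ y).2.2.1 x) h.symm
    have hA₁B₂' : ∀ x y : Fin t, A₁ x ≠ B₂ y := fun x y h => ((hB₂W₂ y).2.2.1 x) h.symm
    have hA₂B₁' : ∀ x y : Fin t, A₂ x ≠ B₁ y := fun x y h => ((hB₁W₂ y).2.2.2 x) h.symm
    have hA₂B₂' : ∀ x y : Fin t, A₂ x ≠ B₂ y := fun x y h => ((hB₂W₂ y).2.2.2 x) h.symm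
    cases c with
    | false =>
      cases c' with
      | false =>
        have hjj' : j ≠ j' := fun h => hne (by rw [h])
        rw [haf, haf]
        refine ⟨hA₁A₁ j j' hjj', ?_, ?_, ?_⟩
        · rcases hbfall j' with ⟨hb', _⟩ | ⟨hb', _⟩
          · rw [hb']; exact hA₁B₁' j i
          · rw [hb']; exact hA12 j j'
        · rcases hbfall j with ⟨hb', _⟩ | ⟨hb', _⟩
          · rw [hb']; exact fun h => hA₁B₁' j' i h.symm
          · rw [hb']; exact fun h => hA12 j' j h.symm
        · rcases hbfall j with ⟨hb1, hji⟩ | ⟨hb1, hji⟩ <;>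
            rcases hbfall j' with ⟨hb2, hji'⟩ | ⟨hb2, hji'⟩
          · exact absurd (hji.trans hji'.symm) hjj'
          · rw [hb1, hb2]; exact fun h => hA₂B₁' j' i h.symm
          · rw [hb1, hb2]; exact hA₂B₁' j i
          · rw [hb1, hb2]; exact hA₂A₂ j j' hjj'
      | true =>
        have hji' := hJmem j' true hl' rfl
        rw [haf, hat, hbt]
        refine ⟨hA₁B₁' j j', hA₁B₂' j j', ?_, ?_⟩
        · rcases hbfall j with ⟨hb1, _⟩ | ⟨hb1, _⟩
          · rw [hb1]; exact hB₁B₁ i j' (fun h => hji' h.symm)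
          · rw [hb1]; exact hA₂B₁' j j'
        · rcases hbfall j with ⟨hb1, _⟩ | ⟨hb1, _⟩
          · rw [hb1]; exact hB12 i j'
          · rw [hb1]; exact hA₂B₂' j j'
    | true =>
      have hji := hJmem j true hl rfl
      cases c' with
      | false =>
        rw [hat, haf, hbt]
        refine ⟨fun h => hA₁B₁' j' j h.symm, ?_, fun h => hA₁B₂' j' j h.symm, ?_⟩
        · rcases hbfall j' with ⟨hb2, _⟩ | ⟨hb2, _⟩
          · rw [hb2]; exact hB₁B₁ j i hji
          · rw [hb2]; exact fun h => hA₂B₁' j' j h.symm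
        · rcases hbfall j' with ⟨hb2, _⟩ | ⟨hb2, _⟩
          · rw [hb2]; exact fun h => hB12 i j h.symm
          · rw [hb2]; exact fun h => hA₂B₂' j' j h.symm
      | true =>
        have hji' := hJmem j' true hl' rfl
        have hjj' : j ≠ j' := fun h => hne (by rw [h])
        rw [hat, hat, hbt, hbt]
        exact ⟨hB₁B₁ j j' hjj', hB12 j j', fun h => hB12 j' j h.symm,
          hB₂B₂ j j' hjj'⟩
  have hJcard : (J.card : ℝ) ≤ 2 * t := by
    have h1 : J.card ≤ (Finset.univ : Finset (Fin t × Bool)).card :=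
      Finset.card_le_card (Finset.erase_subset _ _)
    have h2 : (Finset.univ : Finset (Fin t × Bool)).card = 2 * t := by
      rw [Finset.card_univ, Fintype.card_prod, hcard_fin, Fintype.card_bool]
      ring
    have : (J.card : ℝ) ≤ ((2 * t : ℕ) : ℝ) := by exact_mod_cast h2 ▸ h1
    push_cast at this
    linarith
  obtain ⟨S, hSfac, hSep, hSdj⟩ := chain hP k (m : ℝ)
    (by rw [hcard_fin]; exact hkt) J Wc a b hreach hWend hdis
    (by
      intro p
      have h1 : ((Wc ∩ P p).card : ℝ) ≤ ((W ∩ P p).card : ℝ) + 2 := by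
        have ha := hinter u (insert v W) p
        have hb := hinter v W p
        have : (Wc ∩ P p).card ≤ (W ∩ P p).card + 2 := by rw [hWcdef]; omega
        exact_mod_cast this
      have h2 := hWcard p
      have h3 : ((k : ℝ) + 2) * J.card ≤ ((k : ℝ) + 2) * (2 * t) := by
        refine mul_le_mul_of_nonneg_left hJcard (by linarith)
      nlinarith)
  -- properties of S
  have hSW : ∀ l ∈ J, Disjoint (S l) Wc := fun l hl => (hSfac l hl).2.2.2
  have hSu : ∀ l ∈ J, u ∉ S l := by
    intro l hl h
    exact Finset.disjoint_left.1 (hSW l hl) h (Finset.mem_insert_self _ _)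
  have hSv : ∀ l ∈ J, v ∉ S l := by
    intro l hl h
    exact Finset.disjoint_left.1 (hSW l hl) h
      (Finset.mem_insert_of_mem (Finset.mem_insert_self _ _))
  have hSWonly : ∀ l ∈ J, ∀ x ∈ S l, x ∉ W := by
    intro l hl x hx hxW
    exact Finset.disjoint_left.1 (hSW l hl) hx
      (Finset.mem_insert_of_mem (Finset.mem_insert_of_mem hxW))
  have hScard : ∀ l ∈ J, (S l).card ≤ k * t - 1 := by
    intro l hl
    have := (hSfac l hl).2.2.1
    rwa [hcard_fin] at this
  have hmemWc : ∀ x : V, x ∉ Wc ↔ (x ≠ u ∧ x ≠ v ∧ x ∉ W) := by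
    intro x
    simp [hWcdef, not_or]
  -- assembly
  set cu : Fin t × Bool → V := fun l => if l.2 = true then b l else a l with hcudef
  set cv : Fin t × Bool → V := fun l => if l.2 = true then a l else b l with hcvdef
  have hcuf : ∀ j, cu (j, false) = a (j, false) := fun j => by simp [hcudef]
  have hcut : ∀ j, cu (j, true) = b (j, true) := fun j => by simp [hcudef]
  have hcvf : ∀ j, cv (j, false) = b (j, false) := fun j => by simp [hcvdef]
  have hcvt : ∀ j, cv (j, true) = a (j, true) := fun j => by simp [hcvdef]
  have hcuab : ∀ l : Fin t × Bool, cu l = a l ∨ cu l = b l := by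
    rintro ⟨j, c⟩
    cases c
    · exact Or.inl (hcuf j)
    · exact Or.inr (hcut j)
  have hcvab : ∀ l : Fin t × Bool, cv l = a l ∨ cv l = b l := by
    rintro ⟨j, c⟩
    cases c
    · exact Or.inr (hcvf j)
    · exact Or.inl (hcvt j)
  set Stot : Finset V :=
    J.biUnion (fun l => insert (a l) (insert (b l) (S l))) with hStotdef
  have hStotmem : ∀ x : V,
      x ∈ Stot ↔ ∃ l ∈ J, x = a l ∨ x = b l ∨ x ∈ S l := by
    intro x
    simp only [hStotdef, Finset.mem_biUnion, Finset.mem_insert]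
  have hSepa : ∀ l ∈ J, ∀ l' ∈ J, a l' ∉ S l := fun l hl l' hl' => (hSep l hl l' hl').1
  have hSepb : ∀ l ∈ J, ∀ l' ∈ J, b l' ∉ S l := fun l hl l' hl' => (hSep l hl l' hl').2
  have hScu : ∀ l ∈ J, ∀ l' ∈ J, cu l' ∉ S l := by
    intro l hl l' hl'
    rcases hcuab l' with h | h
    · rw [h]; exact hSepa l hl l' hl'
    · rw [h]; exact hSepb l hl l' hl'
  have hScv : ∀ l ∈ J, ∀ l' ∈ J, cv l' ∉ S l := by
    intro l hl l' hl'
    rcases hcvab l' with h | h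
    · rw [h]; exact hSepa l hl l' hl'
    · rw [h]; exact hSepb l hl l' hl'
  have hcune : ∀ l ∈ J, ∀ l' ∈ J, l ≠ l' → cu l ≠ cu l' := by
    intro l hl l' hl' hne
    have hd := hdis l hl l' hl' hne
    rcases hcuab l with h1 | h1 <;> rcases hcuab l' with h2 | h2 <;> rw [h1, h2]
    · exact hd.1
    · exact hd.2.1
    · exact hd.2.2.1
    · exact hd.2.2.2
  have hcvne : ∀ l ∈ J, ∀ l' ∈ J, l ≠ l' → cv l ≠ cv l' := by
    intro l hl l' hl' hne
    have hd := hdis l hl l' hl' hne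
    rcases hcvab l with h1 | h1 <;> rcases hcvab l' with h2 | h2 <;> rw [h1, h2]
    · exact hd.1
    · exact hd.2.1
    · exact hd.2.2.1
    · exact hd.2.2.2
  -- the set equality for u
  have hequ : insert u Stot = (Finset.image A₂ Finset.univ ∪ Finset.image B₁ Finset.univ)
      ∪ J.biUnion (fun l => insert (cu l) (S l)) := by
    ext x
    simp only [Finset.mem_insert, Finset.mem_union, Finset.mem_biUnion, Finset.mem_image,
      Finset.mem_univ, true_and]
    rw [show (x ∈ Stot) = (∃ l ∈ J, x = a l ∨ x = b l ∨ x ∈ S l) from propext (hStotmem x)]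
    constructor
    · rintro (rfl | ⟨⟨j, c⟩, hl, hx⟩)
      · exact Or.inl (Or.inl ⟨i, hA₂i⟩)
      · cases c with
        | false =>
          rcases hx with rfl | rfl | hx
          · exact Or.inr ⟨(j, false), hl, Or.inl (hcuf j).symm⟩
          · by_cases hji : j = i
            · rw [hji, hbfi]
              exact Or.inl (Or.inr ⟨i, rfl⟩)
            · rw [hbf j hji]
              exact Or.inl (Or.inl ⟨j, rfl⟩)
          · exact Or.inr ⟨(j, false), hl, Or.inr hx⟩
        | true =>
          rcases hx with rfl | rfl | hx
          · rw [hat]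
            exact Or.inl (Or.inr ⟨j, rfl⟩)
          · exact Or.inr ⟨(j, true), hl, Or.inl (hcut j).symm⟩
          · exact Or.inr ⟨(j, true), hl, Or.inr hx⟩
    · rintro ((⟨j, rfl⟩ | ⟨j, rfl⟩) | ⟨l, hl, hx⟩)
      · by_cases hji : j = i
        · rw [hji, hA₂i]
          exact Or.inl rfl
        · exact Or.inr ⟨(j, false), hJff j, Or.inr (Or.inl (hbf j hji).symm)⟩
      · by_cases hji : j = i
        · exact Or.inr ⟨(i, false), hJff i, Or.inr (Or.inl (hji ▸ hbfi.symm))⟩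
        · exact Or.inr ⟨(j, true), hJtt j hji, Or.inl (hat j).symm⟩
      · rcases hx with rfl | hx
        · rcases hcuab l with h | h
          · exact Or.inr ⟨l, hl, Or.inl h⟩
          · exact Or.inr ⟨l, hl, Or.inr (Or.inl h)⟩
        · exact Or.inr ⟨l, hl, Or.inr (Or.inr hx)⟩
  -- the set equality for v
  have heqv : insert v Stot = (Finset.image B₂ Finset.univ ∪ Finset.image A₁ Finset.univ)
      ∪ J.biUnion (fun l => insert (cv l) (S l)) := by
    ext x
    simp only [Finset.mem_insert, Finset.mem_union, Finset.mem_biUnion, Finset.mem_image,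
      Finset.mem_univ, true_and]
    rw [show (x ∈ Stot) = (∃ l ∈ J, x = a l ∨ x = b l ∨ x ∈ S l) from propext (hStotmem x)]
    constructor
    · rintro (rfl | ⟨⟨j, c⟩, hl, hx⟩)
      · exact Or.inl (Or.inl ⟨i, hB₂i⟩)
      · cases c with
        | false =>
          rcases hx with rfl | rfl | hx
          · rw [haf]
            exact Or.inl (Or.inr ⟨j, rfl⟩)
          · exact Or.inr ⟨(j, false), hl, Or.inl (hcvf j).symm⟩
          · exact Or.inr ⟨(j, false), hl, Or.inr hx⟩
        | true =>
          rcases hx with rfl | rfl | hx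
          · exact Or.inr ⟨(j, true), hl, Or.inl (hcvt j).symm⟩
          · rw [hbt]
            exact Or.inl (Or.inl ⟨j, rfl⟩)
          · exact Or.inr ⟨(j, true), hl, Or.inr hx⟩
    · rintro ((⟨j, rfl⟩ | ⟨j, rfl⟩) | ⟨l, hl, hx⟩)
      · by_cases hji : j = i
        · rw [hji, hB₂i]
          exact Or.inl rfl
        · exact Or.inr ⟨(j, true), hJtt j hji, Or.inr (Or.inl (hbt j).symm)⟩
      · exact Or.inr ⟨(j, false), hJff j, Or.inl (haf j).symm⟩
      · rcases hx with rfl | hx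
        · rcases hcvab l with h | h
          · exact Or.inr ⟨l, hl, Or.inl h⟩
          · exact Or.inr ⟨l, hl, Or.inr (Or.inl h)⟩
        · exact Or.inr ⟨l, hl, Or.inr (Or.inr hx)⟩
  have hA₂B₁'' : ∀ x y : Fin t, A₂ x ≠ B₁ y := fun x y h => ((hB₁W₂ y).2.2.2 x) h.symm
  have hA₂B₂'' : ∀ x y : Fin t, A₂ x ≠ B₂ y := fun x y h => ((hB₂W₂ y).2.2.2 x) h.symm
  have hA₁B₁'' : ∀ x y : Fin t, A₁ x ≠ B₁ y := fun x y h => ((hB₁W₂ y).2.2.1 x) h.symm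
  have hA₁B₂'' : ∀ x y : Fin t, A₁ x ≠ B₂ y := fun x y h => ((hB₂W₂ y).2.2.1 x) h.symm
  -- membership of copies' vertices in S l is impossible
  have hA₂S : ∀ l ∈ J, ∀ j, A₂ j ∉ S l := by
    intro l hl j h
    by_cases hji : j = i
    · rw [hji, hA₂i] at h
      exact hSu l hl h
    · exact hSepb l hl (j, false) (hJff j) (by rw [hbf j hji]; exact h)
  have hB₁S : ∀ l ∈ J, ∀ j, B₁ j ∉ S l := by
    intro l hl j h
    by_cases hji : j = i
    · exact hSepb l hl (i, false) (hJff i) (by rw [hbfi, ← hji]; exact h)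
    · exact hSepa l hl (j, true) (hJtt j hji) (by rw [hat]; exact h)
  have hA₁S : ∀ l ∈ J, ∀ j, A₁ j ∉ S l := by
    intro l hl j h
    exact hSepa l hl (j, false) (hJff j) (by rw [haf]; exact h)
  have hB₂S : ∀ l ∈ J, ∀ j, B₂ j ∉ S l := by
    intro l hl j h
    by_cases hji : j = i
    · rw [hji, hB₂i] at h
      exact hSv l hl h
    · exact hSepb l hl (j, true) (hJtt j hji) (by rw [hbt]; exact h)
  -- the factor at u
  have hfu : HasTransversalFactor E F P (insert u Stot) := by
    rw [hequ]
    refine factor_union (factor_union (copy_factor hcA₂) (copy_factor hcB₁) ?_)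
      (factor_biUnion J (fun l => insert (cu l) (S l)) ?_ ?_) ?_
    · rw [Finset.disjoint_left]
      intro x hx hx'
      obtain ⟨j, -, rfl⟩ := Finset.mem_image.1 hx
      obtain ⟨j', -, h⟩ := Finset.mem_image.1 hx'
      exact hA₂B₁'' j j' h.symm
    · rintro ⟨j, c⟩ hl
      cases c with
      | false =>
        show HasTransversalFactor E F P (insert (cu (j, false)) (S (j, false)))
        rw [hcuf]
        exact (hSfac _ hl).1
      | true =>
        show HasTransversalFactor E F P (insert (cu (j, true)) (S (j, true)))
        rw [hcut]
        exact (hSfac _ hl).2.1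
    · intro l hl l' hl' hne
      exact disjoint_insert_insert (hcune l hl l' hl' hne) (hScu l' hl' l hl)
        (hScu l hl l' hl') (hSdj l hl l' hl' hne)
    · rw [Finset.disjoint_biUnion_right]
      intro l hl
      rw [Finset.disjoint_left]
      intro x hx hx'
      rcases Finset.mem_union.1 hx with hx2 | hx2
      · obtain ⟨j, -, rfl⟩ := Finset.mem_image.1 hx2
        rcases Finset.mem_insert.1 hx' with h | h
        · obtain ⟨j', c'⟩ := l
          cases c' with
          | false => rw [hcuf, haf] at h; exact hA12 j' j h.symm
          | true => rw [hcut, hbt] at h; exact hA₂B₂'' j j' h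
        · exact hA₂S l hl j h
      · obtain ⟨j, -, rfl⟩ := Finset.mem_image.1 hx2
        rcases Finset.mem_insert.1 hx' with h | h
        · obtain ⟨j', c'⟩ := l
          cases c' with
          | false => rw [hcuf, haf] at h; exact hA₁B₁'' j' j h.symm
          | true => rw [hcut, hbt] at h; exact hB12 j j' h
        · exact hB₁S l hl j h
  -- the factor at v
  have hfv : HasTransversalFactor E F P (insert v Stot) := by
    rw [heqv]
    refine factor_union (factor_union (copy_factor hcB₂) (copy_factor hcA₁) ?_)
      (factor_biUnion J (fun l => insert (cv l) (S l)) ?_ ?_) ?_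
    · rw [Finset.disjoint_left]
      intro x hx hx'
      obtain ⟨j, -, rfl⟩ := Finset.mem_image.1 hx
      obtain ⟨j', -, h⟩ := Finset.mem_image.1 hx'
      exact hA₁B₂'' j' j h
    · rintro ⟨j, c⟩ hl
      cases c with
      | false =>
        show HasTransversalFactor E F P (insert (cv (j, false)) (S (j, false)))
        rw [hcvf]
        exact (hSfac _ hl).2.1
      | true =>
        show HasTransversalFactor E F P (insert (cv (j, true)) (S (j, true)))
        rw [hcvt]
        exact (hSfac _ hl).1
    · intro l hl l' hl' hne
      exact disjoint_insert_insert (hcvne l hl l' hl' hne) (hScv l' hl' l hl)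
        (hScv l hl l' hl') (hSdj l hl l' hl' hne)
    · rw [Finset.disjoint_biUnion_right]
      intro l hl
      rw [Finset.disjoint_left]
      intro x hx hx'
      rcases Finset.mem_union.1 hx with hx2 | hx2
      · obtain ⟨j, -, rfl⟩ := Finset.mem_image.1 hx2
        rcases Finset.mem_insert.1 hx' with h | h
        · obtain ⟨j', c'⟩ := l
          cases c' with
          | false =>
            rw [hcvf] at h
            rcases hbfall j' with ⟨hb1, -⟩ | ⟨hb1, -⟩
            · rw [hb1] at h; exact hB12 i j h.symm
            · rw [hb1] at h; exact hA₂B₂'' j' j h.symm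
          | true => rw [hcvt, hat] at h; exact hB12 j' j h.symm
        · exact hB₂S l hl j h
      · obtain ⟨j, -, rfl⟩ := Finset.mem_image.1 hx2
        rcases Finset.mem_insert.1 hx' with h | h
        · obtain ⟨j', c'⟩ := l
          cases c' with
          | false =>
            rw [hcvf] at h
            rcases hbfall j' with ⟨hb1, -⟩ | ⟨hb1, -⟩
            · rw [hb1] at h; exact hA₁B₁'' j i h
            · rw [hb1] at h; exact hA12 j j' h
          | true => rw [hcvt, hat] at h; exact hA₁B₁'' j j' h
        · exact hA₁S l hl j h
  -- conclusion
  refine ⟨Stot, ?_, ?_, hfu, hfv⟩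
  · intro x hx
    simp only [Finset.mem_sdiff, Finset.mem_univ, true_and, Finset.mem_union,
      Finset.mem_insert, Finset.mem_singleton, not_or]
    obtain ⟨l, hl, hx⟩ := (hStotmem x).1 hx
    rcases hx with rfl | rfl | hx
    · have := (hmemWc (a l)).1 (hWend l hl).1
      exact ⟨this.2.2, this.1, this.2.1⟩
    · have := (hmemWc (b l)).1 (hWend l hl).2
      exact ⟨this.2.2, this.1, this.2.1⟩
    · exact ⟨hSWonly l hl x hx, fun h => hSu l hl (h ▸ hx), fun h => hSv l hl (h ▸ hx)⟩
  · rw [hcard_fin]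
    have hpc : ∀ l ∈ J, (insert (a l) (insert (b l) (S l))).card ≤ k * t + 1 := by
      intro l hl
      have h1 := Finset.card_insert_le (a l) (insert (b l) (S l))
      have h2 := Finset.card_insert_le (b l) (S l)
      have h3 := hScard l hl
      omega
    have hJcardN : J.card ≤ 2 * t := by
      have h1 : J.card ≤ (Finset.univ : Finset (Fin t × Bool)).card :=
        Finset.card_le_card (Finset.erase_subset _ _)
      have h2 : (Finset.univ : Finset (Fin t × Bool)).card = 2 * t := by
        rw [Finset.card_univ, Fintype.card_prod, hcard_fin, Fintype.card_bool]
        ring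
      omega
    have hcc : Stot.card ≤ 2 * t * (k * t + 1) := by
      calc Stot.card ≤ ∑ l ∈ J, (insert (a l) (insert (b l) (S l))).card :=
            Finset.card_biUnion_le
      _ ≤ ∑ _l ∈ J, (k * t + 1) := Finset.sum_le_sum hpc
      _ = J.card * (k * t + 1) := by rw [Finset.sum_const, smul_eq_mul]
      _ ≤ 2 * t * (k * t + 1) := Nat.mul_le_mul_right _ hJcardN
    have h6 : Stot.card + 1 ≤ 6 * k * t * t := by nlinarith
    exact Nat.le_sub_of_add_le h6

end RD

/-- merging closed sets
(Lemma 2.20 / `lem:merge_closed_and_nonclosed_sets`). -/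
theorem stmt_15 (r t k m : ℕ) (hr : 2 ≤ r) (ht : 1 ≤ t) (hk : 1 ≤ k)
    (hm : 10 * k * t < m)
    (V : Type) [DecidableEq V] [Fintype V]
    (F : Finset (Finset (Fin t))) (E : Finset (Finset V))
    (P : Fin t → Finset V) (hadm : RD.AdmitsPartition E r F P)
    (i : Fin t) (U₁ U₂ : Finset V) (hU₁ : U₁ ⊆ P i) (hU₂ : U₂ ⊆ P i)
    (hclosed : RD.IsClosed E F P (m : ℝ) k U₁)
    (hsize : m + 10 * k * t ≤ U₁.card)
    (hdisj : Disjoint U₁ U₂)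
    (hyp : ∀ W : Finset V,
      (∀ j : Fin t, ((W ∩ P j).card : ℝ) ≤ (m : ℝ) - (k : ℝ) * t) →
      ∀ v ∈ U₂, ∃ ψ₁ ψ₂ : Fin t → V,
        RD.IsTransversalCopy E F P ψ₁ ∧ RD.IsTransversalCopy E F P ψ₂ ∧
        (∀ j, ψ₁ j ∉ W) ∧ (∀ j, ψ₂ j ∉ W) ∧
        Disjoint (Finset.image ψ₁ Finset.univ) (Finset.image ψ₂ Finset.univ) ∧
        ψ₁ i ∈ U₁ ∧ ψ₂ i = v ∧
        ∀ j : Fin t, j ≠ i → RD.Reachable E F P (m : ℝ) k (ψ₁ j) (ψ₂ j)) :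
    RD.IsClosed E F P ((m : ℝ) - 10 * (k : ℝ) * t) (6 * k * t) (U₁ ∪ U₂) := by
  have hP := hadm.1
  have hcard_fin : Fintype.card (Fin t) = t := Fintype.card_fin t
  intro u hu v hv huv
  have hmono : ∀ x y : V, RD.Reachable E F P (m : ℝ) k x y →
      RD.Reachable E F P ((m : ℝ) - 10 * (k : ℝ) * t) (6 * k * t) x y := by
    intro x y hxy
    refine RD.reachable_mono ?_ ?_ hxy
    · have hk0 : (0:ℝ) ≤ (k:ℝ) := Nat.cast_nonneg k
      have ht0 : (0:ℝ) ≤ (t:ℝ) := Nat.cast_nonneg t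
      nlinarith
    · have h1 : k * Fintype.card (Fin t) ≤ 6 * k * t * Fintype.card (Fin t) := by
        calc k * Fintype.card (Fin t) = 1 * (k * Fintype.card (Fin t)) := by ring
        _ ≤ (6 * t) * (k * Fintype.card (Fin t)) :=
            Nat.mul_le_mul_right _ (by omega)
        _ = 6 * k * t * Fintype.card (Fin t) := by ring
      omega
  rcases Finset.mem_union.1 hu with hu1 | hu2 <;> rcases Finset.mem_union.1 hv with hv1 | hv2
  · exact hmono u v (hclosed u hu1 v hv1 huv)
  · exact RD.merge_key1 ht hk F E P hP i U₁ U₂ hU₁ hU₂ hclosed hdisj hyp u hu1 v hv2 huv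
  · exact RD.reachable_symm
      (RD.merge_key1 ht hk F E P hP i U₁ U₂ hU₁ hU₂ hclosed hdisj hyp v hv1 u hu2 huv.symm)
  · exact RD.merge_key2 ht hk F E P hP i U₁ U₂ hU₁ hU₂ hclosed hdisj hyp u hu2 v hv2 huv
end
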